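/- arXiv:math/0403431 — 5 statements merged into one kernel-verified Lean document; each statement's English description precedes it below -/
import Mathlib

section
/- Exactness of the semi-infinite fermionic Koszul complex: for every integer m ≥ 1, the complex ⋯ → 𝒟⊗F_{m+1} →(d) 𝒟⊗F_m →(d) 𝒟⊗F_{m−1} → ⋯ → 𝒟⊗F_0 → 0 is exact at 𝒟⊗F_m; that is, every v ∈ 𝒟⊗F_m with d(v) = 0 satisfies v = d(w) for some w ∈ 𝒟⊗F_{m+1}. -/
open scoped BigOperators

noncomputable section

/-- The ring `𝒟 = ℂ[t₁,t₃,t₅,…]`: variable `k : ℕ` stands for `t_{2k+1}`. -/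
abbrev Dring : Type := MvPolynomial ℕ ℂ

/-- The series `∑_{k≥1} t_{2k-1} z^{2k-1}/(2k-1)`. -/
def genX : PowerSeries Dring :=
  PowerSeries.mk fun n =>
    if n % 2 = 1 then ((n : ℂ)⁻¹) • (MvPolynomial.X ((n - 1) / 2) : Dring) else 0

/-- `T n` is the polynomial `T₋ₙ`, the `n`-th coefficient of `exp(genX) = ∑_j genX^j/j!`
(the sum may be truncated at `j = n` since `genX` has zero constant term). -/
def T (n : ℕ) : Dring :=
  ∑ j ∈ Finset.range (n + 1),
    ((j.factorial : ℂ)⁻¹) • (PowerSeries.coeff (R := Dring) n (genX ^ j))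

/-- Index of a basis vector of the fermionic Fock space: a pair `(R, S)` of finite
sets of modes; `k ∈ R` stands for the factor `b_{k+1}` and `k ∈ S` for `a_{k+1}`. -/
abbrev FockIdx : Type := Finset ℕ × Finset ℕ

/-- The full fermionic Fock space `⊕_m F_m`, with basis `FockIdx`. -/
abbrev Fock : Type := FockIdx →₀ ℂ

/-- `𝒟 ⊗ (⊕_m F_m)`, a free `𝒟`-module with basis `FockIdx`. -/
abbrev DFock : Type := FockIdx →₀ Dring

def charge (x : FockIdx) : ℤ := (x.1.card : ℤ) - x.2.card

def fsingle (x : FockIdx) : Fock := Finsupp.single x 1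

/-- `αₙ` (for `n = k+1`, `k : ℕ`): wedging with `a_{k+1}` with the Koszul sign `(-1)^{deg ξ}`. -/
def alpha (k : ℕ) : Fock →ₗ[ℂ] Fock :=
  Finsupp.lsum ℂ fun x => LinearMap.toSpanSingleton ℂ Fock
    (if k ∈ x.2 then 0 else
      (((-1 : ℂ) ^ x.1.card) * ((-1 : ℂ) ^ (x.2.filter (· < k)).card)) •
        fsingle (x.1, insert k x.2))

/-- `βₙ` (for `n = k+1`): contraction with `b_{k+1}*`, with Koszul signs. -/
def beta (k : ℕ) : Fock →ₗ[ℂ] Fock :=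
  Finsupp.lsum ℂ fun x => LinearMap.toSpanSingleton ℂ Fock
    (if k ∈ x.1 then ((-1 : ℂ) ^ (x.1.filter (· < k)).card) • fsingle (x.1.erase k, x.2)
     else 0)

/-- `ω = ∑_{n≥1} αₙ βₙ` (on each basis vector only finitely many terms are nonzero). -/
def omega : Fock →ₗ[ℂ] Fock :=
  Finsupp.lsum ℂ fun x => LinearMap.toSpanSingleton ℂ Fock
    (∑ k ∈ x.1, alpha k (beta k (fsingle x)))

/-- The charge-`m` Fock space `F_m ⊆ Fock`. -/
def FockC (m : ℤ) : Submodule ℂ Fock := Finsupp.supported ℂ ℂ {x | charge x = m}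

def dsingle (x : FockIdx) : DFock := Finsupp.single x 1

/-- `αₙ`, extended `𝒟`-linearly to `𝒟 ⊗ Fock`. -/
def dAlpha (k : ℕ) : DFock →ₗ[Dring] DFock :=
  Finsupp.lsum Dring fun x => LinearMap.toSpanSingleton Dring DFock
    (if k ∈ x.2 then 0 else
      (((-1 : Dring) ^ x.1.card) * ((-1 : Dring) ^ (x.2.filter (· < k)).card)) •
        dsingle (x.1, insert k x.2))

/-- `βₙ`, extended `𝒟`-linearly to `𝒟 ⊗ Fock`. -/
def dBeta (k : ℕ) : DFock →ₗ[Dring] DFock :=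
  Finsupp.lsum Dring fun x => LinearMap.toSpanSingleton Dring DFock
    (if k ∈ x.1 then ((-1 : Dring) ^ (x.1.filter (· < k)).card) • dsingle (x.1.erase k, x.2)
     else 0)

/-- `d = ∑_{n≥1} T₋₍₂ₙ₋₁₎ βₙ : 𝒟⊗F_m → 𝒟⊗F_{m-1}`. -/
def dOp : DFock →ₗ[Dring] DFock :=
  Finsupp.lsum Dring fun x => LinearMap.toSpanSingleton Dring DFock
    (∑ k ∈ x.1, T (2 * k + 1) • dBeta k (dsingle x))

/-- `ω = ∑_{n≥1} αₙ βₙ`, extended `𝒟`-linearly. -/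
def dOmega : DFock →ₗ[Dring] DFock :=
  Finsupp.lsum Dring fun x => LinearMap.toSpanSingleton Dring DFock
    (∑ k ∈ x.1, dAlpha k (dBeta k (dsingle x)))

/-- The charge-`m` part `𝒟 ⊗ F_m`, as a `𝒟`-submodule. -/
def DFockC (m : ℤ) : Submodule Dring DFock := Finsupp.supported Dring Dring {x | charge x = m}


open MvPolynomial

lemma coeff_genX (n : ℕ) : PowerSeries.coeff (R := Dring) n genX =
    if n % 2 = 1 then ((n : ℂ)⁻¹) • (X ((n - 1) / 2) : Dring) else 0 := by
  simp [genX]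

lemma vars_csmul (c : ℂ) (p : Dring) : (c • p).vars ⊆ p.vars := by
  rcases eq_or_ne c 0 with rfl | hc
  · simp [vars_0]
  · rw [smul_eq_C_mul, vars_C_mul c hc]

lemma vars_coeff_genX {n i : ℕ} (hi : i ∈ (PowerSeries.coeff (R := Dring) n genX).vars) :
    2 * i + 1 = n := by
  rw [coeff_genX] at hi
  split_ifs at hi with h
  · have hn : (n : ℂ)⁻¹ ≠ 0 := by
      have : n ≠ 0 := by omega
      simp [this]
    rw [smul_eq_C_mul, vars_C_mul _ hn, vars_X] at hi
    simp only [Finset.mem_singleton] at hi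
    omega
  · simp [vars_0] at hi

lemma vars_coeff_genX_pow {j n i : ℕ} (hi : i ∈ (PowerSeries.coeff (R := Dring) n (genX ^ j)).vars) :
    2 * i + 1 ≤ n := by
  induction j generalizing n with
  | zero =>
      rw [pow_zero, PowerSeries.coeff_one] at hi
      split_ifs at hi <;> simp [vars_0, vars_one] at hi
  | succ j IH =>
      rw [pow_succ, PowerSeries.coeff_mul] at hi
      obtain ⟨p, hp, hip⟩ := Finset.mem_biUnion.mp (vars_sum_subset _ _ hi)
      have hps : p.1 + p.2 = n := Finset.HasAntidiagonal.mem_antidiagonal.mp hp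
      rcases Finset.mem_union.mp (vars_mul _ _ hip) with h | h
      · exact le_trans (IH h) (by omega)
      · have := vars_coeff_genX h; omega

lemma constantCoeff_genX_pow {j : ℕ} (hj : j ≠ 0) :
    PowerSeries.coeff (R := Dring) 0 (genX ^ j) = 0 := by
  have h0 : PowerSeries.constantCoeff (R := Dring) genX = 0 := by
    rw [← PowerSeries.coeff_zero_eq_constantCoeff, coeff_genX]; simp
  rw [PowerSeries.coeff_zero_eq_constantCoeff, map_pow, h0, zero_pow hj]

lemma vars_coeff_genX_pow_ne_one {j n i : ℕ} (hj : j ≠ 1)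
    (hi : i ∈ (PowerSeries.coeff (R := Dring) n (genX ^ j)).vars) : 2 * i + 1 < n := by
  match j, hj with
  | 0, _ =>
      rw [pow_zero, PowerSeries.coeff_one] at hi
      split_ifs at hi <;> simp [vars_0, vars_one] at hi
  | (j+2), _ =>
      rw [pow_succ, PowerSeries.coeff_mul] at hi
      obtain ⟨p, hp, hip⟩ := Finset.mem_biUnion.mp (vars_sum_subset _ _ hi)
      have hps : p.1 + p.2 = n := Finset.HasAntidiagonal.mem_antidiagonal.mp hp
      have hp1 : p.1 ≠ 0 := by
        intro h0
        rw [h0, constantCoeff_genX_pow (by omega)] at hip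
        simp [vars_0] at hip
      have hp2 : p.2 ≠ 0 := by
        intro h0
        have hz : (PowerSeries.coeff (R := Dring) 0) genX = 0 := by rw [coeff_genX]; simp
        rw [h0, hz] at hip
        simp [vars_0] at hip
      rcases Finset.mem_union.mp (vars_mul _ _ hip) with h | h
      · have := vars_coeff_genX_pow h; omega
      · have := vars_coeff_genX h; omega

lemma vars_T {n i : ℕ} (hi : i ∈ (T n).vars) : 2 * i + 1 ≤ n := by
  rw [T] at hi
  obtain ⟨j, _, hij⟩ := Finset.mem_biUnion.mp (vars_sum_subset _ _ hi)
  exact vars_coeff_genX_pow (vars_csmul _ _ hij)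

def Rpoly (k : ℕ) : Dring := T (2*k+1) - (((2*k+1 : ℕ) : ℂ))⁻¹ • X k

lemma T_eq (k : ℕ) : T (2*k+1) = (((2*k+1 : ℕ) : ℂ))⁻¹ • X k + Rpoly k := by
  rw [Rpoly]; ring

lemma Rpoly_eq (k : ℕ) : Rpoly k =
    ∑ j ∈ (Finset.range (2*k+2)).erase 1,
      ((j.factorial : ℂ)⁻¹) • (PowerSeries.coeff (R := Dring) (2*k+1) (genX ^ j)) := by
  have h1 : (1 : ℕ) ∈ Finset.range (2*k+2) := by simp
  have hc : PowerSeries.coeff (R := Dring) (2*k+1) (genX ^ 1) = (((2*k+1 : ℕ) : ℂ))⁻¹ • X k := by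
    rw [pow_one, coeff_genX]
    have hm : (2*k+1) % 2 = 1 := by omega
    rw [if_pos hm]
    have h2 : (2*k+1-1)/2 = k := by omega
    rw [h2]
  rw [Rpoly, T, ← Finset.add_sum_erase _ _ h1, hc]
  simp

lemma vars_Rpoly {k i : ℕ} (hi : i ∈ (Rpoly k).vars) : i < k := by
  rw [Rpoly_eq] at hi
  obtain ⟨j, hj, hij⟩ := Finset.mem_biUnion.mp (vars_sum_subset _ _ hi)
  have hj1 : j ≠ 1 := (Finset.mem_erase.mp hj).1
  have := vars_coeff_genX_pow_ne_one hj1 (vars_csmul _ _ hij)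
  omega

def psiX : ℕ → Dring
  | k => (((2*k+1 : ℕ) : ℂ)) • (X k - aeval (fun j => if _ : j < k then psiX j else 0) (Rpoly k))
  decreasing_by assumption

def phiA : Dring →ₐ[ℂ] Dring := aeval (fun k => T (2*k+1))
def psiA : Dring →ₐ[ℂ] Dring := aeval psiX

lemma aeval_congr_vars {g₁ g₂ : ℕ → Dring} {p : Dring} (h : ∀ i ∈ p.vars, g₁ i = g₂ i) :
    aeval g₁ p = aeval g₂ p := by
  have := eval₂Hom_congr' (f₁ := algebraMap ℂ Dring) (f₂ := algebraMap ℂ Dring)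
    (g₁ := g₁) (g₂ := g₂) (p₁ := p) (p₂ := p) rfl (fun i h1 _ => h i h1) rfl
  simpa [aeval_def] using this

lemma psi_T (k : ℕ) : psiA (T (2*k+1)) = X k := by
  have hne : (((2*k+1 : ℕ) : ℂ)) ≠ 0 := by
    exact Nat.cast_ne_zero.mpr (by omega)
  have hR : psiA (Rpoly k) = aeval (fun j => if _ : j < k then psiX j else 0) (Rpoly k) := by
    apply aeval_congr_vars
    intro i hi
    rw [dif_pos (vars_Rpoly hi)]
  have hx : psiA (X k) = psiX k := aeval_X _ _
  rw [T_eq k, map_add, map_smul, hx, psiX, hR.symm]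
  simp only [smul_sub, smul_smul, inv_mul_cancel₀ hne, one_smul]
  abel

lemma phi_psiX (k : ℕ) : phiA (psiX k) = X k := by
  induction k using Nat.strong_induction_on with
  | _ k IH =>
    have hne : (((2*k+1 : ℕ) : ℂ)) ≠ 0 := by exact Nat.cast_ne_zero.mpr (by omega)
    rw [psiX]
    rw [map_smul, map_sub]
    have hX : phiA (X k) = T (2*k+1) := aeval_X _ _
    have hR : phiA (aeval (fun j => if _ : j < k then psiX j else 0) (Rpoly k)) = Rpoly k := by
      rw [comp_aeval_apply]
      have : (fun j => phiA (if _ : j < k then psiX j else 0)) =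
          (fun j => if j ∈ {i | i < k} then (X j : Dring) else 0) := by
        funext j
        by_cases hj : j < k
        · rw [dif_pos hj]; simpa [hj] using IH j hj
        · rw [dif_neg hj]; simp [hj]
      rw [this]
      exact aeval_ite_mem_eq_self _ (by intro i hi; exact vars_Rpoly (by simpa using hi))
    rw [hX, hR, T_eq k]
    rw [add_sub_cancel_right, smul_smul, mul_inv_cancel₀ hne, one_smul]

lemma phi_psi (p : Dring) : phiA (psiA p) = p := by
  have h : phiA.comp psiA = AlgHom.id ℂ Dring := by
    apply MvPolynomial.algHom_ext
    intro i
    simp [psiA, phi_psiX i]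
  calc phiA (psiA p) = (phiA.comp psiA) p := rfl
  _ = p := by rw [h]; rfl

lemma psi_phi (p : Dring) : psiA (phiA p) = p := by
  have h : psiA.comp phiA = AlgHom.id ℂ Dring := by
    apply MvPolynomial.algHom_ext
    intro i
    have : phiA (X i) = T (2*i+1) := aeval_X _ _
    simp [AlgHom.coe_comp, Function.comp_apply, this, psi_T i]
  calc psiA (phiA p) = (psiA.comp phiA) p := rfl
  _ = p := by rw [h]; rfl

def sgn (k : ℕ) (R : Finset ℕ) : ℂ := (-1 : ℂ) ^ ((R.filter (· < k)).card)

def bE (x : FockIdx) (μ : ℕ →₀ ℕ) : DFock := Finsupp.single x (monomial μ 1)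

def Nval (x : FockIdx) (μ : ℕ →₀ ℕ) : ℕ := (μ.sum fun _ n => n) + x.1.card

def dval (x : FockIdx) (μ : ℕ →₀ ℕ) : DFock :=
  ∑ k ∈ μ.support \ x.1,
    (sgn k x.1 * (μ k : ℂ)) • bE (insert k x.1, x.2) (μ - Finsupp.single k 1)

def dK : DFock →ₗ[ℂ] DFock :=
  Finsupp.lsum ℂ fun x => ∑ k ∈ x.1,
    (Finsupp.lsingle (R := ℂ) ((x.1.erase k, x.2) : FockIdx)).comp
      (sgn k x.1 • (LinearMap.mulLeft ℂ (X k : Dring)))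

def hmapL : DFock →ₗ[ℂ] DFock :=
  Finsupp.lsum ℂ fun x => (basisMonomials ℕ ℂ).constr ℂ fun μ => ((Nval x μ : ℂ))⁻¹ • dval x μ

lemma dK_single (x : FockIdx) (q : Dring) :
    dK (Finsupp.single x q) =
      ∑ k ∈ x.1, Finsupp.single ((x.1.erase k, x.2) : FockIdx) (sgn k x.1 • ((X k : Dring) * q)) := by
  rw [dK, Finsupp.lsum_single, LinearMap.sum_apply]
  refine Finset.sum_congr rfl fun k _ => ?_
  rw [LinearMap.comp_apply, LinearMap.smul_apply, LinearMap.mulLeft_apply, Finsupp.lsingle_apply]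

lemma dK_bE (x : FockIdx) (μ : ℕ →₀ ℕ) :
    dK (bE x μ) = ∑ k ∈ x.1, sgn k x.1 • bE (x.1.erase k, x.2) (μ + Finsupp.single k 1) := by
  rw [bE, dK_single]
  refine Finset.sum_congr rfl fun k _ => ?_
  rw [← Finsupp.smul_single, bE]
  congr 1
  rw [X, monomial_mul, one_mul, add_comm]

lemma hmap_bE (x : FockIdx) (μ : ℕ →₀ ℕ) :
    hmapL (bE x μ) = ((Nval x μ : ℂ))⁻¹ • dval x μ := by
  have hb : (monomial μ (1 : ℂ) : Dring) = basisMonomials ℕ ℂ μ := by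
    rw [coe_basisMonomials]
  rw [bE, hb, hmapL, Finsupp.lsum_single, Module.Basis.constr_basis]

lemma sgn_sq (k : ℕ) (R : Finset ℕ) : sgn k R * sgn k R = 1 := by
  rw [sgn, ← mul_pow]
  norm_num

lemma sgn_insert {k : ℕ} {R : Finset ℕ} (hk : k ∉ R) (l : ℕ) :
    sgn l (insert k R) = (if k < l then (-1 : ℂ) else 1) * sgn l R := by
  rw [sgn, sgn, Finset.filter_insert]
  split_ifs with h
  · rw [Finset.card_insert_of_notMem (fun hmem => hk (Finset.mem_of_mem_filter _ hmem)),
      pow_succ]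
    ring
  · ring

lemma sgn_erase {l : ℕ} {R : Finset ℕ} (hl : l ∈ R) (k : ℕ) :
    sgn k (R.erase l) = (if l < k then (-1 : ℂ) else 1) * sgn k R := by
  rw [sgn, sgn, Finset.filter_erase]
  split_ifs with h
  · have hmem : l ∈ R.filter (· < k) := Finset.mem_filter.mpr ⟨hl, h⟩
    rw [Finset.card_erase_of_mem hmem]
    have hc : (R.filter (· < k)).card = ((R.filter (· < k)).card - 1) + 1 :=
      (Nat.succ_pred_eq_of_pos (Finset.card_pos.mpr ⟨l, hmem⟩)).symm
    rw [hc, pow_succ, Nat.add_sub_cancel]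
    ring
  · rw [Finset.erase_eq_of_notMem
      (show l ∉ R.filter (· < k) from fun hmem => h (Finset.mem_filter.mp hmem).2), one_mul]

lemma fs1 {μ : ℕ →₀ ℕ} {k : ℕ} (h : μ k ≠ 0) :
    μ - Finsupp.single k 1 + Finsupp.single k 1 = μ := by
  ext i
  simp only [Finsupp.add_apply, Finsupp.tsub_apply, Finsupp.single_apply]
  split_ifs with h'
  · subst h'; omega
  · omega

lemma fs2 {μ : ℕ →₀ ℕ} {l : ℕ} : μ + Finsupp.single l 1 - Finsupp.single l 1 = μ := by
  ext i
  simp only [Finsupp.add_apply, Finsupp.tsub_apply, Finsupp.single_apply]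
  split_ifs <;> omega

lemma fs3 {μ : ℕ →₀ ℕ} {k l : ℕ} (hkl : k ≠ l) (h : μ k ≠ 0) :
    μ - Finsupp.single k 1 + Finsupp.single l 1 = μ + Finsupp.single l 1 - Finsupp.single k 1 := by
  ext i
  simp only [Finsupp.add_apply, Finsupp.tsub_apply, Finsupp.single_apply]
  split_ifs with h1 h2
  · exact absurd (h1.trans h2.symm) hkl
  · subst h1; omega
  · omega
  · omega

lemma fs4 {μ : ℕ →₀ ℕ} {k l : ℕ} (hkl : k ≠ l) :
    ((μ + Finsupp.single l 1 : ℕ →₀ ℕ) : ℕ → ℕ) k = μ k := by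
  rw [Finsupp.add_apply, Finsupp.single_apply, if_neg (fun h => hkl h.symm)]
  omega

lemma supp_eq {μ : ℕ →₀ ℕ} {l : ℕ} {R : Finset ℕ} (hl : l ∈ R) :
    (μ + Finsupp.single l 1).support \ (R.erase l) = insert l (μ.support \ R) := by
  ext k
  simp only [Finset.mem_sdiff, Finsupp.mem_support_iff, Finsupp.add_apply, Finsupp.single_apply,
    Finset.mem_erase, Finset.mem_insert]
  rcases eq_or_ne k l with rfl | hne
  · simp [hl]
  · have : ¬ l = k := fun h => hne h.symm
    simp [this, hne]

lemma Nval_shift {x : FockIdx} {μ : ℕ →₀ ℕ} {k : ℕ} (hk : k ∈ x.1) :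
    Nval ((x.1.erase k, x.2) : FockIdx) (μ + Finsupp.single k 1) = Nval x μ := by
  have hsum : (μ + Finsupp.single k 1).sum (fun _ n => n) = μ.sum (fun _ n => n) + 1 := by
    rw [Finsupp.sum_add_index' (fun _ => rfl) (fun _ _ _ => rfl), Finsupp.sum_single_index rfl]
  have hcard : (x.1.erase k).card = x.1.card - 1 := Finset.card_erase_of_mem hk
  have hpos : 0 < x.1.card := Finset.card_pos.mpr ⟨k, hk⟩
  simp only [Nval, hsum, hcard]
  omega

lemma dval_pair (R S : Finset ℕ) (μ : ℕ →₀ ℕ) :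
    dval ((R, S) : FockIdx) μ =
      ∑ k ∈ μ.support \ R,
        (sgn k R * (μ k : ℂ)) • bE (insert k R, S) (μ - Finsupp.single k 1) := rfl

lemma dK_bE' (R S : Finset ℕ) (μ : ℕ →₀ ℕ) :
    dK (bE (R, S) μ) = ∑ k ∈ R, sgn k R • bE (R.erase k, S) (μ + Finsupp.single k 1) :=
  dK_bE (R, S) μ

lemma key (x : FockIdx) (μ : ℕ →₀ ℕ) :
    dK (dval x μ) +
      ∑ l ∈ x.1, sgn l x.1 • dval ((x.1.erase l, x.2) : FockIdx) (μ + Finsupp.single l 1)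
    = (Nval x μ : ℂ) • bE x μ := by
  obtain ⟨R, S⟩ := x
  have step1 : ∀ k ∈ μ.support \ R,
      dK ((sgn k R * (μ k : ℂ)) • bE (insert k R, S) (μ - Finsupp.single k 1))
      = (μ k : ℂ) • bE (R, S) μ +
        ∑ l ∈ R, ((sgn k R * sgn l R * (μ k : ℂ)) * (if k < l then (-1:ℂ) else 1)) •
          bE (insert k (R.erase l), S) (μ + Finsupp.single l 1 - Finsupp.single k 1) := by
    intro k hk
    obtain ⟨hks, hkR⟩ := Finset.mem_sdiff.mp hk
    have hμk : μ k ≠ 0 := Finsupp.mem_support_iff.mp hks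
    rw [map_smul, dK_bE', Finset.sum_insert hkR, smul_add]
    congr 1
    · rw [sgn_insert hkR k, if_neg (lt_irrefl k), one_mul,
        Finset.erase_insert hkR, fs1 hμk, smul_smul]
      congr 1
      rw [mul_comm (sgn k R) ((μ k : ℂ)), mul_assoc, sgn_sq, mul_one]
    · rw [Finset.smul_sum]
      refine Finset.sum_congr rfl fun l hl => ?_
      have hkl : k ≠ l := fun h => hkR (h ▸ hl)
      rw [sgn_insert hkR l, Finset.erase_insert_of_ne hkl, fs3 hkl hμk, smul_smul]
      congr 1
      ring
  have step2 : ∀ l ∈ R,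
      sgn l R • dval ((R.erase l, S) : FockIdx) (μ + Finsupp.single l 1)
      = ((μ l : ℂ) + 1) • bE (R, S) μ +
        ∑ k ∈ μ.support \ R, ((sgn k R * sgn l R * (μ k : ℂ)) * (if l < k then (-1:ℂ) else 1)) •
          bE (insert k (R.erase l), S) (μ + Finsupp.single l 1 - Finsupp.single k 1) := by
    intro l hl
    have hlnot : l ∉ μ.support \ R := fun h => (Finset.mem_sdiff.mp h).2 hl
    rw [dval_pair, supp_eq hl, Finset.sum_insert hlnot, smul_add]
    congr 1
    · rw [sgn_erase hl l, if_neg (lt_irrefl l), one_mul, Finset.insert_erase hl, fs2, smul_smul]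
      have happ : ((μ + Finsupp.single l 1 : ℕ →₀ ℕ) : ℕ → ℕ) l = μ l + 1 := by
        simp
      rw [happ]
      congr 1
      rw [← mul_assoc, sgn_sq, one_mul]
      push_cast
      ring
    · rw [Finset.smul_sum]
      refine Finset.sum_congr rfl fun k hk => ?_
      obtain ⟨hks, hkR⟩ := Finset.mem_sdiff.mp hk
      have hkl : k ≠ l := fun h => hkR (h ▸ hl)
      rw [sgn_erase hl k, fs4 hkl, smul_smul]
      congr 1
      ring
  have hT1 : dK (dval ((R, S) : FockIdx) μ) =
      (∑ k ∈ μ.support \ R, (μ k : ℂ)) • bE (R, S) μ +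
      ∑ k ∈ μ.support \ R, ∑ l ∈ R,
        ((sgn k R * sgn l R * (μ k : ℂ)) * (if k < l then (-1:ℂ) else 1)) •
          bE (insert k (R.erase l), S) (μ + Finsupp.single l 1 - Finsupp.single k 1) := by
    rw [dval_pair, map_sum, Finset.sum_congr rfl step1, Finset.sum_add_distrib, ← Finset.sum_smul]
  have hT2 : (∑ l ∈ R, sgn l R • dval ((R.erase l, S) : FockIdx) (μ + Finsupp.single l 1)) =
      (∑ l ∈ R, ((μ l : ℂ) + 1)) • bE (R, S) μ +
      ∑ l ∈ R, ∑ k ∈ μ.support \ R,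
        ((sgn k R * sgn l R * (μ k : ℂ)) * (if l < k then (-1:ℂ) else 1)) •
          bE (insert k (R.erase l), S) (μ + Finsupp.single l 1 - Finsupp.single k 1) := by
    rw [Finset.sum_congr rfl step2, Finset.sum_add_distrib, ← Finset.sum_smul]
  have hNnat : (∑ k ∈ μ.support \ R, μ k) + (∑ l ∈ R, (μ l + 1)) = Nval ((R, S) : FockIdx) μ := by
    have h1 : ∑ l ∈ μ.support ∩ R, μ l = ∑ l ∈ R, μ l := by
      apply Finset.sum_subset Finset.inter_subset_right
      intro a haR hna
      exact Finsupp.notMem_support_iff.mp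
        (fun hs => hna (Finset.mem_inter.mpr ⟨hs, haR⟩))
    have h2 : ∑ k ∈ μ.support \ (μ.support ∩ R), μ k + ∑ k ∈ μ.support ∩ R, μ k
        = ∑ k ∈ μ.support, μ k :=
      Finset.sum_sdiff Finset.inter_subset_left
    rw [Finset.sdiff_inter_self_left] at h2
    have h3 : ∑ l ∈ R, (μ l + 1) = (∑ l ∈ R, μ l) + R.card := by
      rw [Finset.sum_add_distrib, Finset.sum_const, smul_eq_mul, mul_one]
    show _ = μ.sum (fun _ n => n) + R.card
    rw [h3, Finsupp.sum, ← h1, ← add_assoc, h2]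
  have hD : (∑ k ∈ μ.support \ R, (μ k : ℂ)) + (∑ l ∈ R, ((μ l : ℂ) + 1))
      = ((Nval ((R, S) : FockIdx) μ : ℕ) : ℂ) := by
    rw [← hNnat]
    push_cast
    ring
  have hO : (∑ k ∈ μ.support \ R, ∑ l ∈ R,
        ((sgn k R * sgn l R * (μ k : ℂ)) * (if k < l then (-1:ℂ) else 1)) •
          bE (insert k (R.erase l), S) (μ + Finsupp.single l 1 - Finsupp.single k 1)) +
      (∑ l ∈ R, ∑ k ∈ μ.support \ R,
        ((sgn k R * sgn l R * (μ k : ℂ)) * (if l < k then (-1:ℂ) else 1)) •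
          bE (insert k (R.erase l), S) (μ + Finsupp.single l 1 - Finsupp.single k 1)) = 0 := by
    rw [Finset.sum_comm, ← Finset.sum_add_distrib]
    apply Finset.sum_eq_zero
    intro l hl
    rw [← Finset.sum_add_distrib]
    apply Finset.sum_eq_zero
    intro k hk
    have hkl : k ≠ l := fun h => (Finset.mem_sdiff.mp hk).2 (h ▸ hl)
    rw [← add_smul]
    rcases lt_or_gt_of_ne hkl with h | h
    · rw [if_pos h, if_neg (by omega)]
      rw [show (sgn k R * sgn l R * (μ k : ℂ)) * (-1) + (sgn k R * sgn l R * (μ k : ℂ)) * 1 = 0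
        by ring, zero_smul]
    · rw [if_neg (by omega), if_pos h]
      rw [show (sgn k R * sgn l R * (μ k : ℂ)) * 1 + (sgn k R * sgn l R * (μ k : ℂ)) * (-1) = 0
        by ring, zero_smul]
  rw [hT1, hT2, add_add_add_comm, ← add_smul, hD, hO, add_zero]

lemma homotopy_bE (x : FockIdx) (μ : ℕ →₀ ℕ) (hx : x.1.Nonempty) :
    dK (hmapL (bE x μ)) + hmapL (dK (bE x μ)) = bE x μ := by
  have hN : ((Nval x μ : ℕ) : ℂ) ≠ 0 := by
    have := Finset.card_pos.mpr hx
    exact Nat.cast_ne_zero.mpr (by rw [Nval]; omega)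
  have hstep : ∀ k ∈ x.1,
      hmapL (sgn k x.1 • bE (x.1.erase k, x.2) (μ + Finsupp.single k 1))
      = ((Nval x μ : ℕ) : ℂ)⁻¹ •
          (sgn k x.1 • dval ((x.1.erase k, x.2) : FockIdx) (μ + Finsupp.single k 1)) := by
    intro k hk
    rw [map_smul, hmap_bE, Nval_shift hk, smul_comm]
  rw [hmap_bE, map_smul, dK_bE, map_sum, Finset.sum_congr rfl hstep, ← Finset.smul_sum,
    ← smul_add, key, smul_smul, inv_mul_cancel₀ hN, one_smul]

lemma homotopy_single {m : ℤ} (hm : 1 ≤ m) (x : FockIdx) (hx : charge x = m) (p : Dring) :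
    dK (hmapL (Finsupp.single x p)) + hmapL (dK (Finsupp.single x p)) = Finsupp.single x p := by
  have hne : x.1.Nonempty := by
    rw [← Finset.card_pos]
    have h1 : (x.1.card : ℤ) - x.2.card = m := hx
    omega
  have hp : Finsupp.single x p = ∑ μ ∈ p.support, (coeff μ p) • bE x μ := by
    conv_lhs => rw [← p.support_sum_monomial_coeff]
    rw [show (Finsupp.single x (∑ μ ∈ p.support, monomial μ (coeff μ p)) : DFock)
        = Finsupp.lsingle (R := ℂ) x (∑ μ ∈ p.support, monomial μ (coeff μ p)) from rfl,
      map_sum (Finsupp.lsingle (R := ℂ) x) (fun μ => monomial μ (coeff μ p)) p.support]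
    refine Finset.sum_congr rfl fun μ _ => ?_
    rw [Finsupp.lsingle_apply, bE, Finsupp.smul_single, smul_monomial, smul_eq_mul, mul_one]
  rw [hp]
  simp only [map_sum, map_smul]
  rw [← Finset.sum_add_distrib]
  refine Finset.sum_congr rfl fun μ _ => ?_
  rw [← smul_add, homotopy_bE x μ hne]

lemma homotopy (m : ℤ) (hm : 1 ≤ m) :
    ∀ v : DFock, (∀ x ∈ v.support, charge x = m) → dK (hmapL v) + hmapL (dK v) = v := by
  intro v
  induction v using Finsupp.induction with
  | zero => intro _; simp
  | single_add x p f hxf hp IH =>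
    intro hv
    have hxm : charge x = m := by
      apply hv
      rw [Finsupp.mem_support_iff, Finsupp.add_apply, Finsupp.single_eq_same,
        Finsupp.notMem_support_iff.mp hxf, add_zero]
      exact hp
    have hfm : ∀ y ∈ f.support, charge y = m := by
      intro y hy
      apply hv
      have hxy : x ≠ y := fun h => hxf (h ▸ hy)
      rw [Finsupp.mem_support_iff, Finsupp.add_apply, Finsupp.single_eq_of_ne (Ne.symm hxy), zero_add]
      exact Finsupp.mem_support_iff.mp hy
    simp only [map_add]
    rw [add_add_add_comm, homotopy_single hm x hxm p, IH hfm]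

lemma hmap_support (v : DFock) (y : FockIdx) (hy : y ∈ (hmapL v).support) :
    ∃ x ∈ v.support, charge y = charge x + 1 := by
  rw [hmapL, Finsupp.lsum_apply] at hy
  obtain ⟨x, hxv, hyx⟩ := Finset.mem_biUnion.mp (Finsupp.support_sum hy)
  refine ⟨x, hxv, ?_⟩
  rw [Module.Basis.constr_apply] at hyx
  obtain ⟨μ, _, hyμ⟩ := Finset.mem_biUnion.mp (Finsupp.support_sum hyx)
  have h1 : y ∈ (((Nval x μ : ℕ) : ℂ)⁻¹ • dval x μ).support := Finsupp.support_smul hyμ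
  have h2 : y ∈ (dval x μ).support := Finsupp.support_smul h1
  rw [dval] at h2
  obtain ⟨k, hk, hybE⟩ := Finset.mem_biUnion.mp (Finsupp.support_finset_sum h2)
  have h3 : y ∈ (bE (insert k x.1, x.2) (μ - Finsupp.single k 1)).support :=
    Finsupp.support_smul hybE
  have h4 : y = ((insert k x.1, x.2) : FockIdx) :=
    Finset.mem_singleton.mp (Finsupp.support_single_subset h3)
  have hkx : k ∉ x.1 := (Finset.mem_sdiff.mp hk).2
  subst h4
  show ((insert k x.1).card : ℤ) - x.2.card = ((x.1.card : ℤ) - x.2.card) + 1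
  rw [Finset.card_insert_of_notMem hkx]
  push_cast
  ring


lemma dOp_single (x : FockIdx) (p : Dring) :
    dOp (Finsupp.single x p) = ∑ k ∈ x.1,
      (p * T (2*k+1) * ((-1 : Dring) ^ ((x.1.filter (· < k)).card))) •
        Finsupp.single ((x.1.erase k, x.2) : FockIdx) (1 : Dring) := by
  rw [dOp, Finsupp.lsum_single, LinearMap.toSpanSingleton_apply, Finset.smul_sum]
  refine Finset.sum_congr rfl fun k hk => ?_
  rw [dBeta, dsingle, Finsupp.lsum_single, LinearMap.toSpanSingleton_apply, one_smul,
    if_pos hk, dsingle, smul_smul, smul_smul, mul_assoc]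

def PhiL : DFock →ₗ[ℂ] DFock := Finsupp.mapRange.linearMap phiA.toLinearMap
def PsiL : DFock →ₗ[ℂ] DFock := Finsupp.mapRange.linearMap psiA.toLinearMap

lemma PhiL_single (x : FockIdx) (p : Dring) :
    PhiL (Finsupp.single x p) = Finsupp.single x (phiA p) := by
  rw [PhiL, Finsupp.mapRange.linearMap_apply, Finsupp.mapRange_single]
  rfl

lemma PhiL_apply (v : DFock) (y : FockIdx) : PhiL v y = phiA (v y) := by
  rw [PhiL, Finsupp.mapRange.linearMap_apply, Finsupp.mapRange_apply]
  rfl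

lemma PsiL_apply (v : DFock) (y : FockIdx) : PsiL v y = psiA (v y) := by
  rw [PsiL, Finsupp.mapRange.linearMap_apply, Finsupp.mapRange_apply]
  rfl

lemma PhiPsi (v : DFock) : PhiL (PsiL v) = v := by
  ext y
  rw [PhiL_apply, PsiL_apply, phi_psi]

lemma PsiPhi (v : DFock) : PsiL (PhiL v) = v := by
  ext y
  rw [PsiL_apply, PhiL_apply, psi_phi]

lemma support_PhiL (v : DFock) : (PhiL v).support ⊆ v.support := by
  intro y hy
  rw [Finsupp.mem_support_iff] at hy ⊢
  intro h0
  rw [PhiL_apply, h0, map_zero] at hy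
  exact hy rfl

lemma support_PsiL (v : DFock) : (PsiL v).support ⊆ v.support := by
  intro y hy
  rw [Finsupp.mem_support_iff] at hy ⊢
  intro h0
  rw [PsiL_apply, h0, map_zero] at hy
  exact hy rfl

lemma comm_phi_single (x : FockIdx) (p : Dring) :
    dOp (PhiL (Finsupp.single x p)) = PhiL (dK (Finsupp.single x p)) := by
  rw [PhiL_single, dOp_single, dK_single, map_sum]
  refine Finset.sum_congr rfl fun k hk => ?_
  rw [PhiL_single]
  have hφ : phiA (sgn k x.1 • ((X k : Dring) * p)) =
      sgn k x.1 • (T (2*k+1) * phiA p) := by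
    rw [map_smul, map_mul]
    congr 2
    exact aeval_X _ _
  rw [hφ, Finsupp.smul_single, smul_eq_mul, mul_one]
  congr 1
  rw [sgn, smul_eq_C_mul, map_pow, map_neg, map_one]
  ring

lemma comm_phi (u : DFock) : dOp (PhiL u) = PhiL (dK u) := by
  induction u using Finsupp.induction with
  | zero => simp
  | single_add x p f _ _ IH =>
    rw [map_add, map_add, map_add, map_add, comm_phi_single, IH]

lemma comm_psi (v : DFock) : dK (PsiL v) = PsiL (dOp v) := by
  have h1 : PhiL (dK (PsiL v)) = dOp v := by
    rw [← comm_phi, PhiPsi]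
  have h2 := congrArg PsiL h1
  rw [PsiPhi] at h2
  rw [h2]


/-- Exactness of the semi-infinite fermionic Koszul complex:
for every integer `m ≥ 1`, every `v ∈ 𝒟⊗F_m` with `d v = 0` is of the form
`v = d w` for some `w ∈ 𝒟⊗F_{m+1}`. -/
theorem koszul_exactness (m : ℤ) (hm : 1 ≤ m) :
    ∀ v ∈ DFockC m, dOp v = 0 → ∃ w ∈ DFockC (m + 1), dOp w = v := by
  intro v hv hdv
  rw [DFockC, Finsupp.mem_supported] at hv
  have hsupp : ∀ x ∈ v.support, charge x = m := fun x hx => hv hx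
  have hsupp' : ∀ x ∈ (PsiL v).support, charge x = m :=
    fun x hx => hsupp x (support_PsiL v hx)
  have hdKv' : dK (PsiL v) = 0 := by
    rw [comm_psi, hdv, map_zero]
  have hhom := homotopy m hm (PsiL v) hsupp'
  rw [hdKv', map_zero, add_zero] at hhom
  refine ⟨PhiL (hmapL (PsiL v)), ?_, ?_⟩
  · rw [DFockC, Finsupp.mem_supported]
    intro y hy
    have hy' : y ∈ (hmapL (PsiL v)).support := support_PhiL _ hy
    obtain ⟨x, hxv', hcy⟩ := hmap_support (PsiL v) y hy'
    show charge y = m + 1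
    rw [hcy, hsupp' x hxv']
  · rw [comm_phi, hhom, PhiPsi]

end
end

section
/- Injectivity of the divided-power operator in the odd sector: for every integer m ≥ 1, the restriction ω′ : F′_{m,0} → F′_{m−2,0} is injective. -/
open scoped BigOperators

noncomputable section

/-! ### Odd sector
In the odd sector the `a`-modes are indexed by `n ≥ 0`: an element `k` of the second
component of a Fock index stands for `a′_k`, while an element `k` of the first component
stands for `b′_{k+1}`.  The space `F′_m` and the operators `α′ₙ` (`n ≥ 0`), `β′ₙ` (`n ≥ 1`)
are realized by the same `Fock`, `alpha`, `beta` as above under this reading. -/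

/-- `ω′ = ∑_{n≥1} α′ₙ β′ₙ : F′_m → F′_{m−2}`. -/
def omegaO : Fock →ₗ[ℂ] Fock :=
  Finsupp.lsum ℂ fun x => LinearMap.toSpanSingleton ℂ Fock
    (∑ k ∈ x.1, alpha (k + 1) (beta k (fsingle x)))

/-- `F′_{m,0} ⊆ F′_m`: the part not involving the mode `a′₀`. -/
def FockC0 (m : ℤ) : Submodule ℂ Fock :=
  Finsupp.supported ℂ ℂ {x | charge x = m ∧ 0 ∉ x.2}


/-! ### Auxiliary development for the proof -/

lemma lsumE_single (g : FockIdx → Fock) (x : FockIdx) :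
    (Finsupp.lsum ℂ fun y => LinearMap.toSpanSingleton ℂ Fock (g y)) (fsingle x) = g x := by
  rw [fsingle, Finsupp.lsum_single, LinearMap.toSpanSingleton_apply, one_smul]

lemma neg_one_mul_self (n : ℕ) : ((-1:ℂ))^n * (-1)^n = 1 := by
  rw [← pow_add]; exact Even.neg_one_pow ⟨n, rfl⟩

lemma triple_sq (a b c : ℕ) :
    ((-1:ℂ)^a * (-1:ℂ)^b * (-1:ℂ)^c) * ((-1:ℂ)^a * (-1:ℂ)^b * (-1:ℂ)^c) = 1 := by
  calc ((-1:ℂ)^a * (-1:ℂ)^b * (-1:ℂ)^c) * ((-1:ℂ)^a * (-1:ℂ)^b * (-1:ℂ)^c)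
      = ((-1:ℂ)^a * (-1:ℂ)^a) * (((-1:ℂ)^b * (-1:ℂ)^b) * ((-1:ℂ)^c * (-1:ℂ)^c)) := by ring
    _ = 1 := by rw [neg_one_mul_self, neg_one_mul_self, neg_one_mul_self]; ring

lemma neg_one_pow_eq {a b : ℕ} (h : a % 2 = b % 2) : ((-1:ℂ))^a = (-1:ℂ)^b := by
  rw [← Nat.div_add_mod a 2, ← Nat.div_add_mod b 2, h, pow_add, pow_add, pow_mul, pow_mul]
  norm_num

/-- The sign with which `ω′` sends the basis vector `x` (with `k ∈ x.1`) to `Etgt x k`. -/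
def Esgn (x : FockIdx) (k : ℕ) : ℂ :=
  if k + 1 ∈ x.2 then 0 else
    (-1) ^ (x.1.filter (· < k)).card * (-1) ^ (x.1.erase k).card *
      (-1) ^ (x.2.filter (· < k + 1)).card

def Etgt (x : FockIdx) (k : ℕ) : FockIdx := (x.1.erase k, insert (k + 1) x.2)

lemma omegaO_single (x : FockIdx) :
    omegaO (fsingle x) = ∑ k ∈ x.1, Esgn x k • fsingle (Etgt x k) := by
  have h0 : omegaO (fsingle x) = ∑ k ∈ x.1, alpha (k + 1) (beta k (fsingle x)) :=
    lsumE_single _ x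
  rw [h0]
  refine Finset.sum_congr rfl fun k hk => ?_
  have hb : beta k (fsingle x)
      = ((-1:ℂ) ^ (x.1.filter (· < k)).card) • fsingle (x.1.erase k, x.2) :=
    (lsumE_single _ x).trans (if_pos hk)
  have ha : alpha (k + 1) (fsingle (x.1.erase k, x.2))
      = (if k + 1 ∈ x.2 then (0 : Fock) else
          (((-1:ℂ) ^ (x.1.erase k).card) * ((-1:ℂ) ^ ((x.2.filter (· < k + 1)).card))) •
            fsingle (x.1.erase k, insert (k + 1) x.2)) :=
    lsumE_single _ _
  rw [hb, map_smul, ha]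
  by_cases h2 : k + 1 ∈ x.2
  · rw [if_pos h2, smul_zero, show Esgn x k = 0 from if_pos h2, zero_smul]
  · rw [if_neg h2, smul_smul,
      show Esgn x k = (-1:ℂ) ^ (x.1.filter (· < k)).card * (-1:ℂ) ^ (x.1.erase k).card *
        (-1:ℂ) ^ (x.2.filter (· < k + 1)).card from if_neg h2, mul_assoc]
    rfl

/-- Sign of the lowering operator. -/
def Fsgn (x : FockIdx) (j : ℕ) : ℂ :=
  if j = 0 ∨ j - 1 ∈ x.1 then 0 else
    (-1) ^ (x.1.filter (· < j - 1)).card * (-1) ^ x.1.card *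
      (-1) ^ (x.2.filter (· < j)).card

def Ftgt (x : FockIdx) (j : ℕ) : FockIdx := (insert (j - 1) x.1, x.2.erase j)

/-- The lowering operator `F` (formal transpose of `ω′`). -/
def fOp : Fock →ₗ[ℂ] Fock :=
  Finsupp.lsum ℂ fun x => LinearMap.toSpanSingleton ℂ Fock
    (∑ j ∈ x.2, Fsgn x j • fsingle (Ftgt x j))

lemma fOp_single (x : FockIdx) :
    fOp (fsingle x) = ∑ j ∈ x.2, Fsgn x j • fsingle (Ftgt x j) :=
  lsumE_single _ x

def Gterm (x : FockIdx) (j k : ℕ) : Fock :=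
  (Fsgn x j * Esgn (Ftgt x j) k) • fsingle (Etgt (Ftgt x j) k)

def Gterm' (x : FockIdx) (k j : ℕ) : Fock :=
  (Esgn x k * Fsgn (Etgt x k) j) • fsingle (Ftgt (Etgt x k) j)

lemma claim1 (x : FockIdx) (j : ℕ) (hj0 : j ≠ 0) (hj : j ∈ x.2) :
    Fsgn x j • omegaO (fsingle (Ftgt x j))
      = (if j - 1 ∈ x.1 then (0:ℂ) else 1) • fsingle x + ∑ k ∈ x.1, Gterm x j k := by
  by_cases hjR : j - 1 ∈ x.1
  · have hF : Fsgn x j = 0 := if_pos (Or.inr hjR)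
    simp [hF, Gterm, if_pos hjR]
  · have hj1 : j - 1 + 1 = j := by omega
    have hF : Fsgn x j = (-1:ℂ) ^ (x.1.filter (· < j - 1)).card * (-1:ℂ) ^ x.1.card *
        (-1:ℂ) ^ (x.2.filter (· < j)).card := if_neg (by tauto)
    have hsum : (Ftgt x j).1 = insert (j - 1) x.1 := rfl
    rw [omegaO_single, hsum, Finset.sum_insert hjR, smul_add, Finset.smul_sum]
    congr 1
    · have htgt : Etgt (Ftgt x j) (j - 1) = x := by
        simp only [Etgt, Ftgt, hj1, Finset.erase_insert hjR, Finset.insert_erase hj]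
      have hcond : ¬ (j - 1 + 1 ∈ (Ftgt x j).2) := by
        rw [hj1]; exact Finset.notMem_erase j x.2
      have hs1 : (Ftgt x j).1.filter (· < j - 1) = x.1.filter (· < j - 1) := by
        show (insert (j - 1) x.1).filter (· < j - 1) = _
        rw [Finset.filter_insert, if_neg (lt_irrefl (j - 1))]
      have hs2 : (Ftgt x j).1.erase (j - 1) = x.1 := Finset.erase_insert hjR
      have hs3 : (Ftgt x j).2.filter (· < j - 1 + 1) = x.2.filter (· < j) := by
        show (x.2.erase j).filter (· < j - 1 + 1) = _
        rw [hj1, Finset.filter_erase]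
        exact Finset.erase_eq_of_notMem
          (fun hmem => absurd (Finset.mem_filter.mp hmem).2 (lt_irrefl j))
      have hE : Esgn (Ftgt x j) (j - 1) = (-1:ℂ) ^ (x.1.filter (· < j - 1)).card *
          (-1:ℂ) ^ x.1.card * (-1:ℂ) ^ (x.2.filter (· < j)).card := by
        calc Esgn (Ftgt x j) (j - 1)
            = (-1:ℂ) ^ ((Ftgt x j).1.filter (· < j - 1)).card *
              (-1:ℂ) ^ ((Ftgt x j).1.erase (j - 1)).card *
              (-1:ℂ) ^ ((Ftgt x j).2.filter (· < j - 1 + 1)).card := if_neg hcond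
          _ = _ := by rw [hs1, hs2, hs3]
      rw [smul_smul, hE, htgt, hF, if_neg hjR, triple_sq]
    · exact Finset.sum_congr rfl fun k _ => by rw [smul_smul]; rfl

lemma claim2 (x : FockIdx) (k : ℕ) (hk : k ∈ x.1) :
    Esgn x k • fOp (fsingle (Etgt x k))
      = (if k + 1 ∈ x.2 then (0:ℂ) else 1) • fsingle x + ∑ j ∈ x.2, Gterm' x k j := by
  by_cases hk2 : k + 1 ∈ x.2
  · have hE : Esgn x k = 0 := if_pos hk2
    simp [hE, Gterm', if_pos hk2]
  · have hE : Esgn x k = (-1:ℂ) ^ (x.1.filter (· < k)).card * (-1:ℂ) ^ (x.1.erase k).card *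
        (-1:ℂ) ^ (x.2.filter (· < k + 1)).card := if_neg hk2
    have hsum : (Etgt x k).2 = insert (k + 1) x.2 := rfl
    rw [fOp_single, hsum, Finset.sum_insert hk2, smul_add, Finset.smul_sum]
    congr 1
    · have htgt : Ftgt (Etgt x k) (k + 1) = x := by
        simp only [Ftgt, Etgt, Nat.add_sub_cancel, Finset.insert_erase hk,
          Finset.erase_insert hk2]
      have hcond : ¬ (k + 1 = 0 ∨ k + 1 - 1 ∈ (Etgt x k).1) := by
        push_neg
        refine ⟨Nat.succ_ne_zero k, ?_⟩
        show ¬ (k + 1 - 1 ∈ x.1.erase k)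
        rw [Nat.add_sub_cancel]
        exact Finset.notMem_erase k x.1
      have hs1 : (Etgt x k).1.filter (· < k + 1 - 1) = x.1.filter (· < k) := by
        show (x.1.erase k).filter (· < k + 1 - 1) = _
        rw [Nat.add_sub_cancel, Finset.filter_erase]
        exact Finset.erase_eq_of_notMem
          (fun hmem => absurd (Finset.mem_filter.mp hmem).2 (lt_irrefl k))
      have hs3 : (Etgt x k).2.filter (· < k + 1) = x.2.filter (· < k + 1) := by
        show (insert (k + 1) x.2).filter (· < k + 1) = _
        rw [Finset.filter_insert, if_neg (lt_irrefl (k + 1))]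
      have hF : Fsgn (Etgt x k) (k + 1) = (-1:ℂ) ^ (x.1.filter (· < k)).card *
          (-1:ℂ) ^ (x.1.erase k).card * (-1:ℂ) ^ (x.2.filter (· < k + 1)).card := by
        calc Fsgn (Etgt x k) (k + 1)
            = (-1:ℂ) ^ ((Etgt x k).1.filter (· < k + 1 - 1)).card *
              (-1:ℂ) ^ ((Etgt x k).1).card *
              (-1:ℂ) ^ ((Etgt x k).2.filter (· < k + 1)).card := if_neg hcond
          _ = _ := by rw [hs1, hs3]; rfl
      rw [smul_smul, hF, htgt, hE, if_neg hk2, triple_sq]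
    · exact Finset.sum_congr rfl fun j _ => by rw [smul_smul]; rfl

lemma claim3 (x : FockIdx) (j : ℕ) (hj0 : j ≠ 0) (hj : j ∈ x.2) (k : ℕ) (hk : k ∈ x.1) :
    Gterm x j k = Gterm' x k j := by
  by_cases hkj : k = j - 1
  · subst hkj
    have h1 : Fsgn x j = 0 := if_pos (Or.inr hk)
    have h2 : Esgn x (j - 1) = 0 :=
      if_pos (by rw [show j - 1 + 1 = j from by omega]; exact hj)
    simp [Gterm, Gterm', h1, h2]
  · have hjk1 : j ≠ k + 1 := by omega
    have hne1 : j - 1 ≠ k := fun h => hkj h.symm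
    by_cases hjR : j - 1 ∈ x.1
    · have h1 : Fsgn x j = 0 := if_pos (Or.inr hjR)
      have h2 : Fsgn (Etgt x k) j = 0 := by
        refine if_pos (Or.inr ?_)
        show j - 1 ∈ x.1.erase k
        exact Finset.mem_erase.mpr ⟨hne1, hjR⟩
      simp [Gterm, Gterm', h1, h2]
    · by_cases hk2 : k + 1 ∈ x.2
      · have h1 : Esgn x k = 0 := if_pos hk2
        have h2 : Esgn (Ftgt x j) k = 0 := by
          refine if_pos ?_
          show k + 1 ∈ x.2.erase j
          exact Finset.mem_erase.mpr ⟨fun h => hjk1 h.symm, hk2⟩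
        simp [Gterm, Gterm', h1, h2]
      · -- the main case
        have htgt : Etgt (Ftgt x j) k = Ftgt (Etgt x k) j := by
          simp only [Etgt, Ftgt]
          exact congrArg₂ Prod.mk (Finset.erase_insert_of_ne hne1)
            (Finset.erase_insert_of_ne (fun h => hjk1 h.symm)).symm
        have hA : Fsgn x j = (-1:ℂ) ^ (x.1.filter (· < j - 1)).card * (-1:ℂ) ^ x.1.card *
            (-1:ℂ) ^ (x.2.filter (· < j)).card := if_neg (by tauto)
        have hB : Esgn x k = (-1:ℂ) ^ (x.1.filter (· < k)).card *
            (-1:ℂ) ^ (x.1.erase k).card *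
            (-1:ℂ) ^ (x.2.filter (· < k + 1)).card := if_neg hk2
        have hC : Esgn (Ftgt x j) k = (-1:ℂ) ^ ((insert (j - 1) x.1).filter (· < k)).card *
            (-1:ℂ) ^ ((insert (j - 1) x.1).erase k).card *
            (-1:ℂ) ^ ((x.2.erase j).filter (· < k + 1)).card := by
          refine if_neg ?_
          show ¬ (k + 1 ∈ x.2.erase j)
          intro hmem
          exact hk2 (Finset.mem_of_mem_erase hmem)
        have hD : Fsgn (Etgt x k) j = (-1:ℂ) ^ ((x.1.erase k).filter (· < j - 1)).card *
            (-1:ℂ) ^ (x.1.erase k).card *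
            (-1:ℂ) ^ ((insert (k + 1) x.2).filter (· < j)).card := by
          refine if_neg ?_
          push_neg
          refine ⟨hj0, ?_⟩
          show ¬ (j - 1 ∈ x.1.erase k)
          intro hmem
          exact hjR (Finset.mem_of_mem_erase hmem)
        unfold Gterm Gterm'
        rw [htgt, hA, hB, hC, hD]
        congr 1
        have r1 : (x.1.erase k).card + 1 = x.1.card := Finset.card_erase_add_one hk
        have r2 : ((insert (j - 1) x.1).erase k).card = (x.1.erase k).card + 1 := by
          rw [Finset.erase_insert_of_ne hne1, Finset.card_insert_of_notMem
            (fun hmem => hjR (Finset.mem_of_mem_erase hmem))]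
        rcases Nat.lt_or_ge k (j - 1) with hcase | hcase
        · -- k + 1 < j
          have e1 : ((insert (j - 1) x.1).filter (· < k)) = x.1.filter (· < k) := by
            rw [Finset.filter_insert, if_neg (by omega : ¬ (j - 1 < k))]
          have e2 : ((x.2.erase j).filter (· < k + 1)).card
              = (x.2.filter (· < k + 1)).card := by
            rw [Finset.filter_erase, Finset.erase_eq_of_notMem
              (fun hmem => absurd (Finset.mem_filter.mp hmem).2 (by omega))]
          have e3 : ((x.1.erase k).filter (· < j - 1)).card + 1
              = (x.1.filter (· < j - 1)).card := by
            rw [Finset.filter_erase]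
            exact Finset.card_erase_add_one (Finset.mem_filter.mpr ⟨hk, hcase⟩)
          have e4 : ((insert (k + 1) x.2).filter (· < j)).card
              = (x.2.filter (· < j)).card + 1 := by
            rw [Finset.filter_insert, if_pos (by omega : k + 1 < j),
              Finset.card_insert_of_notMem (fun hmem => hk2 (Finset.mem_filter.mp hmem).1)]
          rw [e1, e2, e4, r2]
          simp only [← pow_add]
          apply neg_one_pow_eq
          omega
        · -- j - 1 < k (since k ≠ j - 1), i.e. j < k + 1
          have hjlek : j - 1 < k := by omega
          have hjk : j < k + 1 := by omega
          have e1 : ((insert (j - 1) x.1).filter (· < k)).card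
              = (x.1.filter (· < k)).card + 1 := by
            rw [Finset.filter_insert, if_pos hjlek, Finset.card_insert_of_notMem
              (fun hmem => hjR (Finset.mem_filter.mp hmem).1)]
          have e2 : ((x.2.erase j).filter (· < k + 1)).card + 1
              = (x.2.filter (· < k + 1)).card := by
            rw [Finset.filter_erase]
            exact Finset.card_erase_add_one (Finset.mem_filter.mpr ⟨hj, hjk⟩)
          have e3 : ((x.1.erase k).filter (· < j - 1)) = x.1.filter (· < j - 1) := by
            rw [Finset.filter_erase, Finset.erase_eq_of_notMem
              (fun hmem => absurd (Finset.mem_filter.mp hmem).2 (by omega))]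
          have e4 : ((insert (k + 1) x.2).filter (· < j)) = x.2.filter (· < j) := by
            rw [Finset.filter_insert, if_neg (by omega : ¬ (k + 1 < j))]
          rw [e1, e3, e4, r2]
          simp only [← pow_add]
          apply neg_one_pow_eq
          omega

lemma comm_single (x : FockIdx) (h0 : 0 ∉ x.2) :
    omegaO (fOp (fsingle x)) - fOp (omegaO (fsingle x))
      = ((x.2.card : ℂ) - (x.1.card : ℂ)) • fsingle x := by
  have key1 : ∀ j ∈ x.2, j ≠ 0 := fun j hj h => h0 (h ▸ hj)
  rw [fOp_single, omegaO_single, map_sum, map_sum]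
  simp only [map_smul]
  rw [Finset.sum_congr rfl fun j hj => claim1 x j (key1 j hj) hj,
    Finset.sum_congr rfl fun k hk => claim2 x k hk,
    Finset.sum_add_distrib, Finset.sum_add_distrib]
  have hdouble : ∑ j ∈ x.2, ∑ k ∈ x.1, Gterm x j k
      = ∑ k ∈ x.1, ∑ j ∈ x.2, Gterm' x k j := by
    rw [Finset.sum_comm]
    exact Finset.sum_congr rfl fun k hk => Finset.sum_congr rfl fun j hj =>
      claim3 x j (key1 j hj) hj k hk
  rw [hdouble, show ∀ A B X : Fock, (A + X) - (B + X) = A - B from fun _ _ _ => by abel,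
    ← Finset.sum_smul, ← Finset.sum_smul, ← sub_smul]
  congr 1
  have hgen : ∀ (s : Finset ℕ) (P : ℕ → Prop) (inst : DecidablePred P),
      (∑ a ∈ s, if P a then (0:ℂ) else 1) = (s.card : ℂ) - ((s.filter P).card : ℂ) := by
    intro s P inst
    rw [Finset.sum_congr rfl (fun a _ => show (if P a then (0:ℂ) else 1)
        = 1 - (if P a then 1 else 0) from by split <;> ring),
      Finset.sum_sub_distrib, Finset.sum_const, Finset.sum_boole, nsmul_eq_mul, mul_one]
  rw [hgen, hgen]
  have hcc : (x.2.filter (fun j => j - 1 ∈ x.1)).card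
      = (x.1.filter (fun k => k + 1 ∈ x.2)).card := by
    refine Finset.card_bij' (fun j _ => j - 1) (fun k _ => k + 1) ?_ ?_ ?_ ?_
    · intro a ha
      obtain ⟨ha2, ha1⟩ := Finset.mem_filter.mp ha
      have ha0 : a ≠ 0 := key1 a ha2
      refine Finset.mem_filter.mpr ⟨ha1, ?_⟩
      rw [show a - 1 + 1 = a from by omega]
      exact ha2
    · intro a ha
      obtain ⟨ha1, ha2⟩ := Finset.mem_filter.mp ha
      refine Finset.mem_filter.mpr ⟨ha2, ?_⟩
      rw [Nat.add_sub_cancel]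
      exact ha1
    · intro a ha
      have ha0 : a ≠ 0 := key1 a (Finset.mem_filter.mp ha).1
      show a - 1 + 1 = a
      omega
    · intro a _
      show a + 1 - 1 = a
      omega
  rw [hcc]
  ring

/-- Induction over a supported subspace. -/
lemma span_supported_induction {s : Set FockIdx} {P : Fock → Prop}
    (h0 : P 0) (hadd : ∀ u v, P u → P v → P (u + v))
    (hsmul : ∀ (c : ℂ) v, P v → P (c • v))
    (hs : ∀ x ∈ s, P (fsingle x)) : ∀ v ∈ Finsupp.supported ℂ ℂ s, P v := by
  intro v hv
  rw [Finsupp.supported_eq_span_single] at hv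
  refine Submodule.span_induction ?_ h0 (fun a b _ _ ha hb => hadd a b ha hb)
    (fun c a _ ha => hsmul c a ha) hv
  rintro y ⟨x, hx, rfl⟩; exact hs x hx

lemma comm_vec (c : ℤ) : ∀ v ∈ Finsupp.supported ℂ ℂ {x : FockIdx | charge x = c ∧ 0 ∉ x.2},
    omegaO (fOp v) - fOp (omegaO v) = (-(c : ℂ)) • v := by
  refine span_supported_induction ?_ ?_ ?_ ?_
  · simp
  · intro u w hu hw
    simp only [map_add]
    rw [smul_add, ← hu, ← hw]
    abel
  · intro a w hw
    simp only [map_smul]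
    rw [← smul_sub, hw, smul_comm]
  · intro x hx
    rw [comm_single x hx.2]
    congr 1
    have h2 : ((x.1.card : ℤ) - (x.2.card : ℤ)) = c := hx.1
    have h3 : ((x.1.card : ℂ) - (x.2.card : ℂ)) = ((c : ℤ) : ℂ) := by
      exact_mod_cast congrArg (fun z : ℤ => (z : ℂ)) h2
    linear_combination -h3

lemma omegaO_mem (c : ℤ) : ∀ v ∈ Finsupp.supported ℂ ℂ {x : FockIdx | charge x = c ∧ 0 ∉ x.2},
    omegaO v ∈ Finsupp.supported ℂ ℂ {x : FockIdx | charge x = c - 2 ∧ 0 ∉ x.2} := by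
  refine span_supported_induction ?_ ?_ ?_ ?_
  · rw [map_zero]; exact Submodule.zero_mem _
  · intro u w hu hw; rw [map_add]; exact Submodule.add_mem _ hu hw
  · intro a w hw; rw [map_smul]; exact Submodule.smul_mem _ _ hw
  · intro x hx
    obtain ⟨hc, h00⟩ := hx
    rw [omegaO_single]
    refine Submodule.sum_mem _ fun k hk => ?_
    by_cases h2 : k + 1 ∈ x.2
    · rw [show Esgn x k = 0 from if_pos h2, zero_smul]; exact Submodule.zero_mem _
    · refine Submodule.smul_mem _ _ (Finsupp.single_mem_supported ℂ 1 ?_)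
      constructor
      · have hc1 : (x.1.erase k).card + 1 = x.1.card := Finset.card_erase_add_one hk
        have hc2 : (insert (k + 1) x.2).card = x.2.card + 1 := Finset.card_insert_of_notMem h2
        simp only [charge, Etgt] at hc ⊢
        omega
      · show 0 ∉ insert (k + 1) x.2
        intro hmem
        rcases Finset.mem_insert.mp hmem with h | h
        · omega
        · exact h00 h

lemma fOp_mem (c : ℤ) : ∀ v ∈ Finsupp.supported ℂ ℂ {x : FockIdx | charge x = c ∧ 0 ∉ x.2},
    fOp v ∈ Finsupp.supported ℂ ℂ {x : FockIdx | charge x = c + 2 ∧ 0 ∉ x.2} := by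
  refine span_supported_induction ?_ ?_ ?_ ?_
  · rw [map_zero]; exact Submodule.zero_mem _
  · intro u w hu hw; rw [map_add]; exact Submodule.add_mem _ hu hw
  · intro a w hw; rw [map_smul]; exact Submodule.smul_mem _ _ hw
  · intro x hx
    obtain ⟨hc, h00⟩ := hx
    rw [fOp_single]
    refine Submodule.sum_mem _ fun j hj => ?_
    by_cases hcond : j = 0 ∨ j - 1 ∈ x.1
    · rw [show Fsgn x j = 0 from if_pos hcond, zero_smul]; exact Submodule.zero_mem _
    · push_neg at hcond
      refine Submodule.smul_mem _ _ (Finsupp.single_mem_supported ℂ 1 ?_)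
      constructor
      · have hc1 : (insert (j - 1) x.1).card = x.1.card + 1 :=
          Finset.card_insert_of_notMem hcond.2
        have hc2 : (x.2.erase j).card + 1 = x.2.card := Finset.card_erase_add_one hj
        simp only [charge, Ftgt] at hc ⊢
        omega
      · show 0 ∉ x.2.erase j
        intro hmem
        exact h00 (Finset.mem_of_mem_erase hmem)

lemma fOp_sub (n : ℕ) : ∀ v ∈ Finsupp.supported ℂ ℂ {x : FockIdx | x.2.card ≤ n + 1},
    fOp v ∈ Finsupp.supported ℂ ℂ {x : FockIdx | x.2.card ≤ n} := by
  refine span_supported_induction ?_ ?_ ?_ ?_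
  · rw [map_zero]; exact Submodule.zero_mem _
  · intro u w hu hw; rw [map_add]; exact Submodule.add_mem _ hu hw
  · intro a w hw; rw [map_smul]; exact Submodule.smul_mem _ _ hw
  · intro x hx
    rw [fOp_single]
    refine Submodule.sum_mem _ fun j hj => ?_
    refine Submodule.smul_mem _ _ (Finsupp.single_mem_supported ℂ 1 ?_)
    show (Ftgt x j).2.card ≤ n
    have hc2 : (x.2.erase j).card + 1 = x.2.card := Finset.card_erase_add_one hj
    show (x.2.erase j).card ≤ n
    have hx' : x.2.card ≤ n + 1 := hx
    omega

lemma fOp_zero : ∀ v ∈ Finsupp.supported ℂ ℂ {x : FockIdx | x.2.card ≤ 0}, fOp v = 0 := by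
  refine span_supported_induction ?_ ?_ ?_ ?_
  · exact map_zero _
  · intro u w hu hw; rw [map_add, hu, hw, add_zero]
  · intro a w hw; rw [map_smul, hw, smul_zero]
  · intro x hx
    have h2 : x.2 = ∅ := Finset.card_eq_zero.mp (Nat.le_antisymm hx (Nat.zero_le _))
    rw [fOp_single, h2, Finset.sum_empty]

/-- For every integer `m ≥ 1`, the restriction
`ω′ : F′_{m,0} → F′_{m−2,0}` is injective. -/
theorem omegaO_injective (m : ℤ) (hm : 1 ≤ m) :
    ∀ v ∈ FockC0 m, omegaO v = 0 → v = 0 := by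
  intro v hv hev
  have hv' : v ∈ Finsupp.supported ℂ ℂ {x : FockIdx | charge x = m ∧ 0 ∉ x.2} := hv
  have hw : ∀ n : ℕ, fOp^[n] v ∈
      Finsupp.supported ℂ ℂ {x : FockIdx | charge x = m + 2 * (n : ℤ) ∧ 0 ∉ x.2} := by
    intro n
    induction n with
    | zero => simpa using hv'
    | succ n ih =>
      rw [Function.iterate_succ_apply',
        show (m + 2 * ((n + 1 : ℕ) : ℤ)) = m + 2 * (n : ℤ) + 2 from by push_cast; ring]
      exact fOp_mem (m + 2 * (n : ℤ)) _ ih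
  have hrec : ∀ n : ℕ,
      omegaO (fOp^[n + 1] v) = ((-(((n : ℤ) + 1) * (m + (n : ℤ))) : ℤ) : ℂ) • fOp^[n] v := by
    intro n
    induction n with
    | zero =>
      have h' : omegaO (fOp v) = fOp (omegaO v) + (-(m : ℂ)) • v :=
        sub_eq_iff_eq_add'.mp (comm_vec m v hv')
      rw [Function.iterate_succ_apply', Function.iterate_zero_apply, h', hev, map_zero,
        zero_add]
      congr 1
      push_cast
      ring
    | succ n ih =>
      have h' : omegaO (fOp (fOp^[n + 1] v)) = fOp (omegaO (fOp^[n + 1] v)) +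
          (-((m + 2 * ((n + 1 : ℕ) : ℤ) : ℤ) : ℂ)) • fOp^[n + 1] v :=
        sub_eq_iff_eq_add'.mp (comm_vec (m + 2 * ((n + 1 : ℕ) : ℤ)) _ (hw (n + 1)))
      rw [Function.iterate_succ_apply' fOp (n + 1) v, h', ih, map_smul,
        ← Function.iterate_succ_apply' fOp n v, ← add_smul]
      congr 1
      push_cast
      ring
  have hNzero : fOp^[(v.support.sup fun x => x.2.card) + 1] v = 0 := by
    have hgen : ∀ n : ℕ, ∀ u, u ∈ Finsupp.supported ℂ ℂ {x : FockIdx | x.2.card ≤ n} →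
        fOp^[n + 1] u = 0 := by
      intro n
      induction n with
      | zero => intro u hu; exact fOp_zero u hu
      | succ n ih =>
        intro u hu
        rw [Function.iterate_succ_apply]
        exact ih _ (fOp_sub n u hu)
    refine hgen _ v ?_
    rw [Finsupp.mem_supported]
    intro x hx
    show x.2.card ≤ v.support.sup fun x => x.2.card
    exact Finset.le_sup (f := fun y : FockIdx => y.2.card) (Finset.mem_coe.mp hx)
  have hdown : ∀ n : ℕ, fOp^[n + 1] v = 0 → fOp^[n] v = 0 := by
    intro n h
    have h2 := hrec n
    rw [h, map_zero] at h2
    have hpos : (0 : ℤ) < ((n : ℤ) + 1) * (m + (n : ℤ)) :=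
      mul_pos (by omega) (by omega)
    have hC : ((-(((n : ℤ) + 1) * (m + (n : ℤ))) : ℤ) : ℂ) ≠ 0 :=
      Int.cast_ne_zero.mpr (neg_ne_zero.mpr hpos.ne')
    exact (smul_eq_zero.mp h2.symm).resolve_left hC
  have hzero : ∀ n : ℕ, fOp^[n] v = 0 → v = 0 := by
    intro n
    induction n with
    | zero => intro h; simpa using h
    | succ n ih => intro h; exact ih (hdown n h)
  exact hzero _ hNzero

end
end

section
/- The minimal generators of the chiral space over the integrals of motion (odd sector): let 𝔪 ⊂ 𝒟 be the ideal generated by all the variables t₁,t₃,t₅,…. For every integer m ≥ 0, the quotient A′_m/𝔪A′_m is isomorphic as a complex vector space to W′_{m,0}. -/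
open scoped BigOperators

noncomputable section

/-- `d′ = α′₀ + ∑_{n≥1} T₋₂ₙ β′ₙ : 𝒟⊗F′_m → 𝒟⊗F′_{m−1}`. -/
def dOpO : DFock →ₗ[Dring] DFock :=
  Finsupp.lsum Dring fun x => LinearMap.toSpanSingleton Dring DFock
    (dAlpha 0 (dsingle x) + ∑ k ∈ x.1, T (2 * (k + 1)) • dBeta k (dsingle x))

/-- `ω′`, extended `𝒟`-linearly. -/
def dOmegaO : DFock →ₗ[Dring] DFock :=
  Finsupp.lsum Dring fun x => LinearMap.toSpanSingleton Dring DFock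
    (∑ k ∈ x.1, dAlpha (k + 1) (dBeta k (dsingle x)))

/-- The charge-`m` part `𝒟 ⊗ F′_m`, as a `ℂ`-submodule of `𝒟 ⊗ Fock`. -/
def DFockCc (m : ℤ) : Submodule ℂ DFock := Finsupp.supported Dring ℂ {x | charge x = m}

/-- The `ℂ`-subspace `d′(𝒟⊗F′_{m+1}) + ω′(𝒟⊗F′_{m+2})` of `𝒟⊗F′_m`, so that
`A′_m = (𝒟⊗F′_m)/NAO m`. -/
def NAO (m : ℤ) : Submodule ℂ DFock :=
  Submodule.map (dOpO.restrictScalars ℂ) (DFockCc (m + 1)) ⊔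
    Submodule.map (dOmegaO.restrictScalars ℂ) (DFockCc (m + 2))

/-- The ideal `𝔪 = (t₁, t₃, t₅, …) ⊆ 𝒟`. -/
def mIdeal : Ideal Dring := Ideal.span (Set.range (MvPolynomial.X : ℕ → Dring))

/-- The `ℂ`-subspace of `𝒟⊗Fock` corresponding to `𝔪·(𝒟⊗F′_m)`. -/
def mPart (m : ℤ) : Submodule ℂ DFock :=
  Submodule.span ℂ {z | ∃ c ∈ mIdeal, ∃ v ∈ DFockCc m, z = c • v}

/-- `A′_m/𝔪A′_m`, realized as the image of `𝒟⊗F′_m` in the quotient of `𝒟⊗Fock` by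
`d′(𝒟⊗F′_{m+1}) + ω′(𝒟⊗F′_{m+2}) + 𝔪·(𝒟⊗F′_m)`. -/
def AmodMO (m : ℤ) : Submodule ℂ (DFock ⧸ (NAO m ⊔ mPart m)) :=
  Submodule.map (NAO m ⊔ mPart m).mkQ (DFockCc m)

/-- `W′_{m,0} = F′_{m,0}/ω′(F′_{m+2,0})`, realized as the image of `F′_{m,0}` in the
quotient of `Fock` by `ω′(F′_{m+2,0})` (note `ω′(F′_{m+2,0}) ⊆ F′_{m,0}`). -/
def W0sub (m : ℤ) : Submodule ℂ (Fock ⧸ Submodule.map omegaO (FockC0 (m + 2))) :=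
  Submodule.map (Submodule.map omegaO (FockC0 (m + 2))).mkQ (FockC0 m)

namespace MinGenAux
open MvPolynomial Submodule

lemma dAlpha_dsingle (k : ℕ) (x : FockIdx) : dAlpha k (dsingle x) =
    (if k ∈ x.2 then 0 else
      (((-1 : Dring) ^ x.1.card) * ((-1 : Dring) ^ (x.2.filter (· < k)).card)) •
        dsingle (x.1, insert k x.2)) := by
  simp [dAlpha, dsingle, LinearMap.toSpanSingleton_apply]

lemma dBeta_dsingle (k : ℕ) (x : FockIdx) : dBeta k (dsingle x) =
    (if k ∈ x.1 then ((-1 : Dring) ^ (x.1.filter (· < k)).card) • dsingle (x.1.erase k, x.2)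
     else 0) := by
  simp [dBeta, dsingle, LinearMap.toSpanSingleton_apply]

lemma alpha_fsingle (k : ℕ) (x : FockIdx) : alpha k (fsingle x) =
    (if k ∈ x.2 then 0 else
      (((-1 : ℂ) ^ x.1.card) * ((-1 : ℂ) ^ (x.2.filter (· < k)).card)) •
        fsingle (x.1, insert k x.2)) := by
  simp [alpha, fsingle, LinearMap.toSpanSingleton_apply]

lemma beta_fsingle (k : ℕ) (x : FockIdx) : beta k (fsingle x) =
    (if k ∈ x.1 then ((-1 : ℂ) ^ (x.1.filter (· < k)).card) • fsingle (x.1.erase k, x.2)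
     else 0) := by
  simp [beta, fsingle, LinearMap.toSpanSingleton_apply]

lemma alpha_single (k : ℕ) (x : FockIdx) (c : ℂ) :
    alpha k (Finsupp.single x c) = c • alpha k (fsingle x) := by
  simp [alpha, fsingle, LinearMap.toSpanSingleton_apply]

lemma beta_single (k : ℕ) (x : FockIdx) (c : ℂ) :
    beta k (Finsupp.single x c) = c • beta k (fsingle x) := by
  simp [beta, fsingle, LinearMap.toSpanSingleton_apply]

lemma dOpO_single (x : FockIdx) (p : Dring) :
    dOpO (Finsupp.single x p) =
      p • (dAlpha 0 (dsingle x) + ∑ k ∈ x.1, T (2 * (k + 1)) • dBeta k (dsingle x)) := by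
  simp [dOpO, LinearMap.toSpanSingleton_apply]

lemma dOmegaO_single (x : FockIdx) (p : Dring) :
    dOmegaO (Finsupp.single x p) =
      p • ∑ k ∈ x.1, dAlpha (k + 1) (dBeta k (dsingle x)) := by
  simp [dOmegaO, LinearMap.toSpanSingleton_apply]

lemma omegaO_single (x : FockIdx) (c : ℂ) :
    omegaO (Finsupp.single x c) =
      c • ∑ k ∈ x.1, alpha (k + 1) (beta k (fsingle x)) := by
  simp [omegaO, LinearMap.toSpanSingleton_apply]

end MinGenAux
namespace MinGenAux
open MvPolynomial Submodule

lemma dAlpha_single (k : ℕ) (x : FockIdx) (p : Dring) :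
    dAlpha k (Finsupp.single x p) = p • dAlpha k (dsingle x) := by
  simp [dAlpha, dsingle, LinearMap.toSpanSingleton_apply]

lemma dBeta_single (k : ℕ) (x : FockIdx) (p : Dring) :
    dBeta k (Finsupp.single x p) = p • dBeta k (dsingle x) := by
  simp [dBeta, dsingle, LinearMap.toSpanSingleton_apply]

end MinGenAux
namespace MinGenAux
open MvPolynomial Submodule

def piF : DFock →ₗ[ℂ] Fock :=
  Finsupp.lsum ℂ fun x =>
    (LinearMap.toSpanSingleton ℂ Fock (if 0 ∈ x.2 then 0 else fsingle x)).comp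
      (MvPolynomial.lcoeff ℂ 0)

def LF : Fock →ₗ[ℂ] DFock := Finsupp.mapRange.linearMap (Algebra.linearMap ℂ Dring)

lemma piF_single (x : FockIdx) (p : Dring) :
    piF (Finsupp.single x p) =
      MvPolynomial.coeff 0 p • (if 0 ∈ x.2 then 0 else fsingle x) := by
  simp [piF, LinearMap.toSpanSingleton_apply]

lemma LF_single (x : FockIdx) (c : ℂ) :
    LF (Finsupp.single x c) = Finsupp.single x (MvPolynomial.C c) := by
  simp [LF, Finsupp.mapRange_single, Algebra.linearMap_apply, MvPolynomial.algebraMap_eq]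

lemma LF_fsingle (x : FockIdx) : LF (fsingle x) = dsingle x := by
  simp [fsingle, dsingle, LF_single]

lemma csmul_eq_C_smul (c : ℂ) (w : DFock) : c • w = (MvPolynomial.C c : Dring) • w := by
  ext z
  simp [MvPolynomial.smul_eq_C_mul, smul_eq_mul]

lemma dsmul_single (p : Dring) (z : FockIdx) (r : Dring) :
    p • (Finsupp.single z r : DFock) = Finsupp.single z (p * r) := by
  rw [Finsupp.smul_single, smul_eq_mul]

lemma coeff_zero_mul (p r : Dring) :
    MvPolynomial.coeff 0 (p * r) = MvPolynomial.coeff 0 p * MvPolynomial.coeff 0 r := by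
  simpa [MvPolynomial.constantCoeff_eq] using map_mul MvPolynomial.constantCoeff p r

lemma piF_smul (p : Dring) (w : DFock) :
    piF (p • w) = MvPolynomial.coeff 0 p • piF w := by
  induction w using Finsupp.induction_linear with
  | zero => simp
  | add a b ha hb => rw [smul_add, map_add, ha, hb, map_add, smul_add]
  | single z r =>
      rw [dsmul_single, piF_single, piF_single, coeff_zero_mul, mul_smul]

lemma mIdeal_coeff_zero {p : Dring} (hp : p ∈ mIdeal) : MvPolynomial.coeff 0 p = 0 := by
  have h : mIdeal ≤ RingHom.ker (MvPolynomial.constantCoeff (σ := ℕ) (R := ℂ)) := by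
    rw [mIdeal, Ideal.span_le]
    rintro _ ⟨i, rfl⟩
    simp [RingHom.mem_ker]
  simpa [MvPolynomial.constantCoeff_eq] using h hp

lemma mem_mIdeal_of_coeff_zero {p : Dring} (h : MvPolynomial.coeff 0 p = 0) : p ∈ mIdeal := by
  have : mIdeal = Ideal.span (MvPolynomial.X '' (Set.univ : Set ℕ)) := by
    rw [mIdeal, Set.image_univ]
  rw [this, MvPolynomial.mem_ideal_span_X_image]
  intro d hd
  have hd0 : d ≠ 0 := by
    rintro rfl
    exact (MvPolynomial.mem_support_iff.mp hd) h
  obtain ⟨i, hi⟩ := Finsupp.ne_iff.mp hd0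
  exact ⟨i, trivial, by simpa using hi⟩

lemma genX_coeff_mem (i : ℕ) : PowerSeries.coeff (R := Dring) i genX ∈ mIdeal := by
  rw [genX, PowerSeries.coeff_mk]
  split
  · rw [MvPolynomial.smul_eq_C_mul]
    exact Ideal.mul_mem_left _ _ (Ideal.subset_span ⟨_, rfl⟩)
  · exact zero_mem _

lemma T_mem {n : ℕ} (hn : 0 < n) : T n ∈ mIdeal := by
  rw [T]
  apply Submodule.sum_mem
  intro j _
  rw [MvPolynomial.smul_eq_C_mul]
  apply Ideal.mul_mem_left
  cases j with
  | zero =>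
      simp [pow_zero, PowerSeries.coeff_one, hn.ne']
  | succ j =>
      rw [pow_succ', PowerSeries.coeff_mul]
      apply Submodule.sum_mem
      intro q _
      exact Ideal.mul_mem_right _ _ (genX_coeff_mem q.1)

end MinGenAux
namespace MinGenAux
open MvPolynomial Submodule

lemma C_sign (a b : ℕ) :
    (MvPolynomial.C (((-1 : ℂ) ^ a) * ((-1 : ℂ) ^ b)) : Dring)
      = ((-1 : Dring) ^ a) * ((-1 : Dring) ^ b) := by
  simp [map_mul, map_pow]

lemma LF_smul (c : ℂ) (v : Fock) : LF (c • v) = (MvPolynomial.C c : Dring) • LF v := by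
  rw [← csmul_eq_C_smul, map_smul]

lemma LF_alpha (k : ℕ) (v : Fock) : LF (alpha k v) = dAlpha k (LF v) := by
  induction v using Finsupp.induction_linear with
  | zero => simp
  | add a b ha hb => rw [map_add, map_add, ha, hb, map_add, map_add]
  | single z c =>
      rw [alpha_single, LF_smul, LF_single, dAlpha_single]
      congr 1
      rw [alpha_fsingle, dAlpha_dsingle]
      split
      · simp
      · rw [LF_smul, LF_fsingle, C_sign]

lemma LF_beta (k : ℕ) (v : Fock) : LF (beta k v) = dBeta k (LF v) := by
  induction v using Finsupp.induction_linear with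
  | zero => simp
  | add a b ha hb => rw [map_add, map_add, ha, hb, map_add, map_add]
  | single z c =>
      rw [beta_single, LF_smul, LF_single, dBeta_single]
      congr 1
      rw [beta_fsingle, dBeta_dsingle]
      split
      · rw [LF_smul, LF_fsingle]
        simp [map_pow]
      · simp

lemma LF_ab (k j : ℕ) (x : FockIdx) :
    LF (alpha j (beta k (fsingle x))) = dAlpha j (dBeta k (dsingle x)) := by
  rw [LF_alpha, LF_beta, LF_fsingle]

lemma LF_omegaO (v : Fock) : LF (omegaO v) = dOmegaO (LF v) := by
  induction v using Finsupp.induction_linear with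
  | zero => simp
  | add a b ha hb => rw [map_add, map_add, ha, hb, ← map_add, ← map_add]
  | single z c =>
      rw [omegaO_single, LF_smul, LF_single, dOmegaO_single, map_sum]
      congr 1
      exact Finset.sum_congr rfl fun k _ => LF_ab k (k + 1) z

end MinGenAux
namespace MinGenAux
open MvPolynomial Submodule

lemma piF_dsingle_mem (x : FockIdx) (h : 0 ∈ x.2) : piF (dsingle x) = 0 := by
  rw [dsingle, piF_single, if_pos h, smul_zero]

lemma piF_dAlpha0 (x : FockIdx) : piF (dAlpha 0 (dsingle x)) = 0 := by
  rw [dAlpha_dsingle]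
  split
  · simp
  · rw [piF_smul, piF_dsingle_mem _ (Finset.mem_insert_self 0 _), smul_zero]

lemma piF_dOpO (z : DFock) : piF (dOpO z) = 0 := by
  induction z using Finsupp.induction_linear with
  | zero => simp
  | add a b ha hb => rw [map_add, map_add, ha, hb, add_zero]
  | single x p =>
      rw [dOpO_single, piF_smul, map_add, piF_dAlpha0, map_sum]
      have h : ∀ k ∈ x.1, piF (T (2 * (k + 1)) • dBeta k (dsingle x)) = 0 := by
        intro k _
        rw [piF_smul, mIdeal_coeff_zero (T_mem (by omega)), zero_smul]
      rw [Finset.sum_congr rfl h]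
      simp

lemma piF_LF_single (z : FockIdx) (c : ℂ) (h : 0 ∉ z.2) :
    piF (LF (Finsupp.single z c)) = Finsupp.single z c := by
  rw [LF_single, piF_single, if_neg h]
  simp [fsingle, Finsupp.smul_single]

lemma omegaO_fsingle (x : FockIdx) :
    omegaO (fsingle x) = ∑ k ∈ x.1, alpha (k + 1) (beta k (fsingle x)) := by
  conv_lhs => rw [fsingle]
  rw [omegaO_single, one_smul]


end MinGenAux
namespace MinGenAux
open MvPolynomial Submodule

lemma piLF_ab (k : ℕ) (x : FockIdx) (h : 0 ∉ x.2) :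
    piF (LF (alpha (k + 1) (beta k (fsingle x)))) = alpha (k + 1) (beta k (fsingle x)) := by
  rw [beta_fsingle]
  by_cases hk1 : k ∈ x.1
  · rw [if_pos hk1]
    rw [map_smul, map_smul, map_smul]
    congr 1
    rw [alpha_fsingle]
    by_cases hk2 : k + 1 ∈ x.2
    · rw [if_pos (show k + 1 ∈ ((x.1.erase k, x.2) : FockIdx).2 from hk2)]
      simp
    · rw [if_neg (show k + 1 ∉ ((x.1.erase k, x.2) : FockIdx).2 from hk2)]
      rw [map_smul, map_smul]
      congr 1
      exact piF_LF_single _ 1 (by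
        simp only [Finset.mem_insert]
        rintro (h0 | h0)
        · exact Nat.succ_ne_zero k h0.symm
        · exact h h0)
  · rw [if_neg hk1]
    simp

end MinGenAux
namespace MinGenAux
open MvPolynomial Submodule

lemma piF_dOmegaO_fsingle (x : FockIdx) (h : 0 ∉ x.2) (p : Dring) :
    piF (dOmegaO (Finsupp.single x p)) =
      MvPolynomial.coeff 0 p • omegaO (fsingle x) := by
  rw [dOmegaO_single, piF_smul]
  congr 1
  rw [omegaO_fsingle, map_sum]
  refine Finset.sum_congr rfl fun k _ => ?_
  rw [← LF_ab, piLF_ab k x h]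

lemma piF_dOmegaO_fsingle0 (x : FockIdx) (h : 0 ∈ x.2) (p : Dring) :
    piF (dOmegaO (Finsupp.single x p)) = 0 := by
  rw [dOmegaO_single, piF_smul]
  have h0 : ∀ k ∈ x.1, piF (dAlpha (k + 1) (dBeta k (dsingle x))) = 0 := by
    intro k _
    rw [dBeta_dsingle]
    by_cases hk1 : k ∈ x.1
    · rw [if_pos hk1, map_smul, piF_smul, dAlpha_dsingle]
      by_cases hk2 : k + 1 ∈ (((x.1.erase k, x.2) : FockIdx)).2
      · rw [if_pos hk2]
        simp
      · rw [if_neg hk2, piF_smul,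
          piF_dsingle_mem _ (Finset.mem_insert_of_mem h)]
        simp
    · rw [if_neg hk1]
      simp
  rw [map_sum, Finset.sum_congr rfl h0]
  simp

end MinGenAux
namespace MinGenAux
open MvPolynomial Submodule

lemma neg_one_sq_pow (c : ℕ) : ((-1 : Dring) ^ c) * ((-1 : Dring) ^ c) = 1 := by
  rw [← pow_add]
  exact Even.neg_one_pow ⟨c, rfl⟩

lemma dBeta_dsingle_memC {m : ℤ} {y : FockIdx} (hcy : charge y = m + 1) (k : ℕ) :
    dBeta k (dsingle y) ∈ DFockCc m := by
  rw [dBeta_dsingle]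
  by_cases hk : k ∈ y.1
  · rw [if_pos hk, DFockCc, Finsupp.mem_supported]
    intro z hz
    rw [Finset.mem_coe] at hz
    have hz2 := Finsupp.support_single_subset (Finsupp.support_smul hz)
    rw [Finset.mem_singleton] at hz2
    subst hz2
    simp only [Set.mem_setOf_eq, charge]
    rw [Finset.cast_card_erase_of_mem hk]
    simp only [charge] at hcy
    omega
  · rw [if_neg hk]
    exact zero_mem _

lemma single_mem_K {m : ℤ} {x : FockIdx} (hc : charge x = m) (h0 : 0 ∈ x.2) (p : Dring) :
    Finsupp.single x p ∈ NAO m ⊔ mPart m := by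
  set y : FockIdx := (x.1, x.2.erase 0) with hy
  have hy2 : 0 ∉ y.2 := Finset.notMem_erase 0 x.2
  have hcy : charge y = m + 1 := by
    simp only [charge, hy] at hc ⊢
    rw [Finset.cast_card_erase_of_mem h0]
    omega
  set q : Dring := (-1 : Dring) ^ x.1.card * p with hq
  have key : dOpO (Finsupp.single y q)
      = Finsupp.single x p + ∑ k ∈ y.1, (q * T (2 * (k + 1))) • dBeta k (dsingle y) := by
    rw [dOpO_single, smul_add]
    congr 1
    · rw [dAlpha_dsingle, if_neg hy2]
      have hfilter : ((y.2.filter (· < 0)).card) = 0 := by simp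
      rw [hfilter, pow_zero, mul_one, smul_smul]
      have h1 : insert 0 y.2 = x.2 := Finset.insert_erase h0
      have h2 : ((y.1, insert 0 y.2) : FockIdx) = x := by
        rw [h1, hy]
      rw [h2, hq]
      have h3 : (-1 : Dring) ^ x.1.card * p * (-1 : Dring) ^ x.1.card = p := by
        rw [mul_comm _ p, mul_assoc, neg_one_sq_pow, mul_one]
      rw [show y.1.card = x.1.card from rfl, h3, dsingle, dsmul_single, mul_one]
    · rw [Finset.smul_sum]
      exact Finset.sum_congr rfl fun k hk => smul_smul q _ _
  have h1 : dOpO (Finsupp.single y q) ∈ NAO m :=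
    Submodule.mem_sup_left
      ⟨Finsupp.single y q, Finsupp.single_mem_supported _ q hcy, rfl⟩
  have h2 : ∀ k ∈ y.1, (q * T (2 * (k + 1))) • dBeta k (dsingle y) ∈ mPart m := by
    intro k hk
    exact Submodule.subset_span
      ⟨q * T (2 * (k + 1)), Ideal.mul_mem_left _ _ (T_mem (by omega)),
        dBeta k (dsingle y), dBeta_dsingle_memC hcy k, rfl⟩
  have h4 : Finsupp.single x p
      = dOpO (Finsupp.single y q) - ∑ k ∈ y.1, (q * T (2 * (k + 1))) • dBeta k (dsingle y) := by
    rw [key, add_sub_cancel_right]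
  rw [h4]
  exact sub_mem (Submodule.mem_sup_left h1)
    (Submodule.mem_sup_right (Submodule.sum_mem _ h2))

end MinGenAux
namespace MinGenAux
open MvPolynomial Submodule

lemma LFpiF_sub_mem {m : ℤ} {x : FockIdx} (hc : charge x = m) (p : Dring) :
    LF (piF (Finsupp.single x p)) - Finsupp.single x p ∈ NAO m ⊔ mPart m := by
  by_cases h0 : 0 ∈ x.2
  · rw [piF_single, if_pos h0, smul_zero, map_zero, zero_sub]
    exact neg_mem (single_mem_K hc h0 p)
  · rw [piF_single, if_neg h0, fsingle, Finsupp.smul_single, smul_eq_mul, mul_one,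
      LF_single, ← Finsupp.single_sub]
    apply Submodule.mem_sup_right
    apply Submodule.subset_span
    refine ⟨C (coeff 0 p) - p, mem_mIdeal_of_coeff_zero ?_, dsingle x,
      Finsupp.single_mem_supported _ 1 hc, ?_⟩
    · rw [MvPolynomial.coeff_sub, MvPolynomial.coeff_zero_C, sub_self]
    · rw [dsingle, dsmul_single, mul_one]

lemma rep_sum {M : Type} [AddCommMonoid M] {z : FockIdx →₀ M} :
    (∑ x ∈ z.support, Finsupp.single x (z x)) = z :=
  Finsupp.sum_single z

lemma mem_K_of {m : ℤ} {z : DFock} (hz : z ∈ DFockCc m) :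
    LF (piF z) - z ∈ NAO m ⊔ mPart m := by
  have : LF (piF z) - z
      = ∑ x ∈ z.support, (LF (piF (Finsupp.single x (z x))) - Finsupp.single x (z x)) := by
    conv_lhs => rw [← rep_sum (z := z)]
    rw [map_sum, map_sum, ← Finset.sum_sub_distrib]
  rw [this]
  exact Submodule.sum_mem _ fun x hx => LFpiF_sub_mem (hz hx) _

lemma piF_single_mem {m : ℤ} {x : FockIdx} (hc : charge x = m) (p : Dring) :
    piF (Finsupp.single x p) ∈ FockC0 m := by
  rw [piF_single]
  by_cases h0 : 0 ∈ x.2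
  · rw [if_pos h0, smul_zero]
    exact zero_mem _
  · rw [if_neg h0]
    exact Submodule.smul_mem _ _ (Finsupp.single_mem_supported ℂ 1 ⟨hc, h0⟩)

lemma piF_mem {m : ℤ} {z : DFock} (hz : z ∈ DFockCc m) : piF z ∈ FockC0 m := by
  rw [← rep_sum (z := z), map_sum]
  exact Submodule.sum_mem _ fun x hx => piF_single_mem (hz hx) _

lemma LF_mem {m : ℤ} {v : Fock} (hv : v ∈ FockC0 m) : LF v ∈ DFockCc m := by
  rw [DFockCc, Finsupp.mem_supported]
  intro x hx
  rw [Finset.mem_coe] at hx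
  have hsub : (LF v).support ⊆ v.support := by
    rw [LF]
    simp only [Finsupp.mapRange.linearMap_apply]
    exact Finsupp.support_mapRange
  exact (hv (hsub hx)).1

lemma piF_LF_id {m : ℤ} {v : Fock} (hv : v ∈ FockC0 m) : piF (LF v) = v := by
  conv_lhs => rw [← rep_sum (z := v)]
  rw [map_sum, map_sum]
  conv_rhs => rw [← rep_sum (z := v)]
  exact Finset.sum_congr rfl fun x hx => piF_LF_single x (v x) (hv hx).2

lemma piF_dOmegaO_mem {m : ℤ} {z : DFock} (hz : z ∈ DFockCc (m + 2)) :
    piF (dOmegaO z) ∈ Submodule.map omegaO (FockC0 (m + 2)) := by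
  rw [← rep_sum (z := z), map_sum, map_sum]
  refine Submodule.sum_mem _ fun x hx => ?_
  by_cases h0 : 0 ∈ x.2
  · rw [piF_dOmegaO_fsingle0 x h0]
    exact zero_mem _
  · rw [piF_dOmegaO_fsingle x h0]
    exact Submodule.smul_mem _ _
      ⟨fsingle x, Finsupp.single_mem_supported ℂ 1 ⟨hz hx, h0⟩, rfl⟩

lemma hKker (m : ℤ) :
    NAO m ⊔ mPart m ≤
      LinearMap.ker ((Submodule.map omegaO (FockC0 (m + 2))).mkQ ∘ₗ piF) := by
  refine sup_le (sup_le ?_ ?_) ?_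
  · rintro _ ⟨z, hz, rfl⟩
    rw [LinearMap.mem_ker, LinearMap.comp_apply]
    rw [show (dOpO.restrictScalars ℂ) z = dOpO z from rfl, piF_dOpO, map_zero]
  · rintro _ ⟨z, hz, rfl⟩
    rw [LinearMap.mem_ker, LinearMap.comp_apply, Submodule.mkQ_apply,
      Submodule.Quotient.mk_eq_zero]
    exact piF_dOmegaO_mem hz
  · rw [mPart, Submodule.span_le]
    rintro _ ⟨c, hc, v, hv, rfl⟩
    rw [SetLike.mem_coe, LinearMap.mem_ker, LinearMap.comp_apply, piF_smul,
      mIdeal_coeff_zero hc, zero_smul, map_zero]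

lemma hQker (m : ℤ) :
    Submodule.map omegaO (FockC0 (m + 2)) ≤
      LinearMap.ker ((NAO m ⊔ mPart m).mkQ ∘ₗ LF) := by
  rintro _ ⟨w, hw, rfl⟩
  rw [LinearMap.mem_ker, LinearMap.comp_apply, LF_omegaO, Submodule.mkQ_apply,
    Submodule.Quotient.mk_eq_zero]
  exact Submodule.mem_sup_left (Submodule.mem_sup_right ⟨LF w, LF_mem hw, rfl⟩)

end MinGenAux
/-- For every integer `m ≥ 0`, `A′_m/𝔪A′_m ≅ W′_{m,0}` as `ℂ`-vector
spaces, where `𝔪 = (t₁,t₃,…) ⊆ 𝒟`. -/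
theorem minimal_generators_odd (m : ℕ) :
    Nonempty (↥(AmodMO m) ≃ₗ[ℂ] ↥(W0sub m)) := by
  classical
  set K : Submodule ℂ DFock := NAO m ⊔ mPart m with hK
  set Q : Submodule ℂ Fock := Submodule.map omegaO (FockC0 ((m : ℤ) + 2)) with hQ
  let Φ : (DFock ⧸ K) →ₗ[ℂ] (Fock ⧸ Q) :=
    K.liftQ (Q.mkQ ∘ₗ MinGenAux.piF) (MinGenAux.hKker m)
  let Θ : (Fock ⧸ Q) →ₗ[ℂ] (DFock ⧸ K) :=
    Q.liftQ (K.mkQ ∘ₗ MinGenAux.LF) (MinGenAux.hQker m)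
  have hΦval : ∀ z : DFock, Φ (K.mkQ z) = Q.mkQ (MinGenAux.piF z) := fun z => rfl
  have hΘval : ∀ v : Fock, Θ (Q.mkQ v) = K.mkQ (MinGenAux.LF v) := fun v => rfl
  have hΦ : ∀ a ∈ AmodMO m, Φ a ∈ W0sub m := by
    rintro _ ⟨z, hz, rfl⟩
    exact ⟨MinGenAux.piF z, MinGenAux.piF_mem hz, (hΦval z).symm⟩
  have hΘ : ∀ b ∈ W0sub m, Θ b ∈ AmodMO m := by
    rintro _ ⟨v, hv, rfl⟩
    exact ⟨MinGenAux.LF v, MinGenAux.LF_mem hv, (hΘval v).symm⟩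
  let f : ↥(AmodMO m) →ₗ[ℂ] ↥(W0sub m) := Φ.restrict hΦ
  let g : ↥(W0sub m) →ₗ[ℂ] ↥(AmodMO m) := Θ.restrict hΘ
  refine ⟨LinearEquiv.ofLinear f g ?_ ?_⟩
  · apply LinearMap.ext
    rintro ⟨b, hb⟩
    obtain ⟨v, hv, rfl⟩ := hb
    apply Subtype.ext
    show Φ (Θ (Q.mkQ v)) = Q.mkQ v
    rw [hΘval, hΦval, MinGenAux.piF_LF_id hv]
  · apply LinearMap.ext
    rintro ⟨a, ha⟩
    obtain ⟨z, hz, rfl⟩ := ha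
    apply Subtype.ext
    show Θ (Φ (K.mkQ z)) = K.mkQ z
    rw [hΦval, hΘval, Submodule.mkQ_apply, Submodule.mkQ_apply,
      Submodule.Quotient.eq]
    exact MinGenAux.mem_K_of hz

end
end

section
/- Symplectic Lefschetz injectivity on exterior powers: for every N ≥ 1 and every k with 0 ≤ k ≤ N−1, the linear map ΛᵏV_N → Λ^{k+2}V_N, v ↦ η_N ∧ v, is injective. -/
open scoped BigOperators

noncomputable section

/-- The `2N`-dimensional complex vector space `V_N` with basis
`α₁,…,α_N` (the `Sum.inl` coordinates) and `β₁,…,β_N` (the `Sum.inr` coordinates). -/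
abbrev VS (N : ℕ) : Type := (Fin N ⊕ Fin N) → ℂ

/-- The basis vector `α_{i+1}` of `V_N`. -/
def av (N : ℕ) (i : Fin N) : VS N := Pi.single (Sum.inl i) 1

/-- The basis vector `β_{i+1}` of `V_N`. -/
def bv (N : ℕ) (i : Fin N) : VS N := Pi.single (Sum.inr i) 1

/-- `η_N = ∑_{i=1}^N αᵢ ∧ βᵢ ∈ Λ²V_N`, inside the exterior algebra of `V_N`. -/
def eta (N : ℕ) : ExteriorAlgebra ℂ (VS N) :=
  ∑ i : Fin N, ExteriorAlgebra.ι ℂ (av N i) * ExteriorAlgebra.ι ℂ (bv N i)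

/-- The `k`-th exterior power `ΛᵏV_N`, as a subspace of the exterior algebra of `V_N`. -/
def EPfin (N k : ℕ) : Submodule ℂ (ExteriorAlgebra ℂ (VS N)) :=
  Submodule.span ℂ (Set.range (ExteriorAlgebra.ιMulti ℂ k))

namespace LefschetzAux

variable {N : ℕ}

local notation "ιE" => ExteriorAlgebra.ι ℂ (M := VS N)

/-- Contraction by the coordinate functional at index `j`. -/
def ctr (N : ℕ) (j : Fin N ⊕ Fin N) :
    ExteriorAlgebra ℂ (VS N) →ₗ[ℂ] ExteriorAlgebra ℂ (VS N) :=
  CliffordAlgebra.contractLeft (LinearMap.proj j)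

lemma ctr_ι_mul (j : Fin N ⊕ Fin N) (m : VS N) (x : ExteriorAlgebra ℂ (VS N)) :
    ctr N j (ιE m * x) = m j • x - ιE m * ctr N j x := by
  rw [ctr]
  exact CliffordAlgebra.contractLeft_ι_mul _ m x

lemma ctr_algebraMap (j : Fin N ⊕ Fin N) (r : ℂ) :
    ctr N j (algebraMap ℂ _ r) = 0 := by
  rw [ctr]
  exact CliffordAlgebra.contractLeft_algebraMap _ _ r

lemma ι_swap (a b : VS N) (y : ExteriorAlgebra ℂ (VS N)) :
    ιE a * (ιE b * y) = -(ιE b * (ιE a * y)) := by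
  have h : ιE a * ιE b + ιE b * ιE a = 0 := by
    rw [CliffordAlgebra.ι_mul_ι_add_swap]
    simp [QuadraticMap.polar]
  have h2 : ιE a * ιE b = -(ιE b * ιE a) := eq_neg_of_add_eq_zero_left h
  rw [← mul_assoc, h2, ← mul_assoc, neg_mul]

/-- The dual Lefschetz operator `Λ`. -/
def Lam (N : ℕ) : ExteriorAlgebra ℂ (VS N) →ₗ[ℂ] ExteriorAlgebra ℂ (VS N) :=
  ∑ j : Fin N, (ctr N (Sum.inr j)) ∘ₗ (ctr N (Sum.inl j))

lemma Lam_apply (x : ExteriorAlgebra ℂ (VS N)) :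
    Lam N x = ∑ j : Fin N, ctr N (Sum.inr j) (ctr N (Sum.inl j) x) := by
  simp [Lam]

/-- The number (degree) operator. -/
def Nop (N : ℕ) : ExteriorAlgebra ℂ (VS N) →ₗ[ℂ] ExteriorAlgebra ℂ (VS N) :=
  ∑ t : Fin N ⊕ Fin N,
    (LinearMap.mulLeft ℂ (ExteriorAlgebra.ι ℂ (Pi.single t 1 : VS N))) ∘ₗ (ctr N t)

lemma Nop_apply (x : ExteriorAlgebra ℂ (VS N)) :
    Nop N x = ∑ t : Fin N ⊕ Fin N, ιE (Pi.single t 1) * ctr N t x := by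
  simp [Nop]

lemma Nop_ι_mul (m : VS N) (x : ExteriorAlgebra ℂ (VS N)) :
    Nop N (ιE m * x) = ιE m * x + ιE m * Nop N x := by
  rw [Nop_apply, Nop_apply]
  have h1 : ∀ t : Fin N ⊕ Fin N,
      ιE (Pi.single t 1) * ctr N t (ιE m * x)
        = m t • (ιE (Pi.single t 1) * x)
          + ιE m * (ιE (Pi.single t 1) * ctr N t x) := by
    intro t
    rw [ctr_ι_mul, mul_sub, mul_smul_comm, ι_swap, sub_neg_eq_add]
  rw [Finset.sum_congr rfl (fun t _ => h1 t), Finset.sum_add_distrib, ← Finset.mul_sum]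
  congr 1
  have h2 : ∑ t : Fin N ⊕ Fin N, m t • (ιE (Pi.single t 1) * x)
      = (∑ t : Fin N ⊕ Fin N, m t • ιE (Pi.single t 1)) * x := by
    rw [Finset.sum_mul]
    simp [smul_mul_assoc]
  have h3 : ∑ t : Fin N ⊕ Fin N, m t • ιE (Pi.single t 1) = ιE m := by
    have h4 : ∀ t : Fin N ⊕ Fin N, m t • (Pi.single t 1 : VS N) = Pi.single t (m t) := by
      intro t
      ext s
      by_cases h : s = t <;> simp [Pi.single_apply, h]
    simp_rw [← map_smul]
    rw [← map_sum]
    congr 1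
    rw [Finset.sum_congr rfl (fun t _ => h4 t)]
    exact Finset.univ_sum_single m
  rw [h2, h3]

lemma Nop_grade {k : ℕ} {x : ExteriorAlgebra ℂ (VS N)} (hx : x ∈ ⋀[ℂ]^k (VS N)) :
    Nop N x = (k : ℂ) • x := by
  refine Submodule.pow_induction_on_left'
    (M := LinearMap.range (ιE))
    (C := fun n y _ => Nop N y = (n : ℂ) • y) ?_ ?_ ?_ hx
  · intro r
    rw [Nop_apply]
    simp [ctr_algebraMap]
  · intro x y i hx hy ihx ihy
    rw [map_add, ihx, ihy, smul_add]
  · rintro m ⟨v, rfl⟩ i y hy ihy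
    rw [Nop_ι_mul, ihy, mul_smul_comm, Nat.cast_succ, add_smul, one_smul]
    exact add_comm _ _

lemma ctr_grade (j : Fin N ⊕ Fin N) {k : ℕ} {x : ExteriorAlgebra ℂ (VS N)}
    (hx : x ∈ ⋀[ℂ]^k (VS N)) :
    (k = 0 → ctr N j x = 0) ∧ ctr N j x ∈ ⋀[ℂ]^(k - 1) (VS N) := by
  refine Submodule.pow_induction_on_left'
    (M := LinearMap.range (ιE))
    (C := fun n y _ => (n = 0 → ctr N j y = 0) ∧ ctr N j y ∈ ⋀[ℂ]^(n - 1) (VS N)) ?_ ?_ ?_ hx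
  · intro r
    rw [ctr_algebraMap]
    exact ⟨fun _ => rfl, Submodule.zero_mem _⟩
  · intro x y i hx hy ihx ihy
    refine ⟨fun h => ?_, ?_⟩
    · rw [map_add, ihx.1 h, ihy.1 h, add_zero]
    · rw [map_add]; exact Submodule.add_mem _ ihx.2 ihy.2
  · rintro m ⟨v, rfl⟩ i y hy ihy
    constructor
    · intro h; exact absurd h (Nat.succ_ne_zero i)
    · rw [ctr_ι_mul]
      refine Submodule.sub_mem _ ?_ ?_
      · simpa using Submodule.smul_mem _ _ hy
      · rcases i with _ | i'
        · rw [ihy.1 rfl, mul_zero]; exact Submodule.zero_mem _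
        · have hmem : ctr N j y ∈ LinearMap.range (ιE) ^ i' := by
            have := ihy.2
            rwa [Nat.add_sub_cancel] at this
          have h5 : ιE v * ctr N j y ∈
              LinearMap.range (ιE) * (LinearMap.range (ιE)) ^ i' :=
            Submodule.mul_mem_mul ⟨v, rfl⟩ hmem
          rw [← pow_succ'] at h5
          have hidx : i' + 1 + 1 - 1 = i' + 1 := by omega
          show ιE v * ctr N j y ∈ ⋀[ℂ]^(i' + 1 + 1 - 1) (VS N)
          rw [hidx]
          exact h5

lemma Lam_grade {k : ℕ} {x : ExteriorAlgebra ℂ (VS N)} (hx : x ∈ ⋀[ℂ]^k (VS N)) :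
    Lam N x ∈ ⋀[ℂ]^(k - 2) (VS N) := by
  rw [Lam_apply]
  refine Submodule.sum_mem _ fun j _ => ?_
  have h1 := (ctr_grade (Sum.inl j) hx).2
  have h2 := (ctr_grade (Sum.inr j) h1).2
  have h3 : k - 1 - 1 = k - 2 := by omega
  rwa [h3] at h2

lemma Lam_low {k : ℕ} (hk : k ≤ 1) {x : ExteriorAlgebra ℂ (VS N)}
    (hx : x ∈ ⋀[ℂ]^k (VS N)) : Lam N x = 0 := by
  rw [Lam_apply]
  refine Finset.sum_eq_zero fun j _ => ?_
  interval_cases k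
  · rw [(ctr_grade (Sum.inl j) hx).1 rfl, map_zero]
  · have h1 := (ctr_grade (Sum.inl j) hx).2
    exact (ctr_grade (Sum.inr j) h1).1 rfl

lemma mul_grade {a b : ℕ} {x y : ExteriorAlgebra ℂ (VS N)}
    (hx : x ∈ ⋀[ℂ]^a (VS N)) (hy : y ∈ ⋀[ℂ]^b (VS N)) :
    x * y ∈ ⋀[ℂ]^(a + b) (VS N) := by
  have h := Submodule.mul_mem_mul hx hy
  rwa [← pow_add] at h

lemma eta_mem : eta N ∈ ⋀[ℂ]^2 (VS N) := by
  refine Submodule.sum_mem _ fun i _ => ?_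
  have h : (ιE (av N i)) * (ιE (bv N i)) ∈
      LinearMap.range (ιE) * LinearMap.range (ιE) :=
    Submodule.mul_mem_mul ⟨_, rfl⟩ ⟨_, rfl⟩
  rw [← pow_two] at h
  exact h

lemma eta_pow_mem (m : ℕ) : eta N ^ m ∈ ⋀[ℂ]^(2 * m) (VS N) := by
  induction m with
  | zero =>
      rw [pow_zero]
      have h1 : (⋀[ℂ]^(2 * 0) (VS N)) = 1 := pow_zero _
      rw [h1]
      exact Submodule.one_le.mp le_rfl
  | succ m ih =>
      have h := mul_grade ih eta_mem
      rw [← pow_succ] at h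
      have h2 : 2 * m + 2 = 2 * (m + 1) := by omega
      rwa [h2] at h

set_option maxHeartbeats 1000000 in
/-- The key commutation identity `Λ(η·x) = η·Λx + N·x − D·x`. -/
lemma star (x : ExteriorAlgebra ℂ (VS N)) :
    Lam N (eta N * x) = eta N * Lam N x + (N : ℂ) • x - Nop N x := by
  have key : ∀ (i j : Fin N),
      ctr N (Sum.inr j) (ctr N (Sum.inl j) (ιE (av N i) * (ιE (bv N i) * x)))
        = (if j = i then
            (x - ιE (bv N j) * ctr N (Sum.inr j) x - ιE (av N j) * ctr N (Sum.inl j) x)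
           else 0)
          + ιE (av N i) * (ιE (bv N i) * ctr N (Sum.inr j) (ctr N (Sum.inl j) x)) := by
    intro i j
    have hai : (av N i) (Sum.inl j) = if j = i then 1 else 0 := by
      simp [av, Pi.single_apply]
    have hai' : (av N i) (Sum.inr j) = 0 := by simp [av, Pi.single_apply]
    have hbi : (bv N i) (Sum.inr j) = if j = i then 1 else 0 := by
      simp [bv, Pi.single_apply]
    have hbi' : (bv N i) (Sum.inl j) = 0 := by simp [bv, Pi.single_apply]
    rcases eq_or_ne j i with rfl | h
    · simp only [eq_self_iff_true, if_true] at hai hbi ⊢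
      simp only [ctr_ι_mul, hai, hai', hbi, hbi', one_smul, zero_smul, map_add, map_sub,
        map_smul, zero_sub, sub_neg_eq_add, mul_add, mul_sub, mul_neg, smul_sub, smul_add,
        map_neg, mul_zero, sub_zero, zero_mul, neg_neg]
      try abel
    · simp only [if_neg h] at hai hbi ⊢
      simp only [ctr_ι_mul, hai, hai', hbi, hbi', one_smul, zero_smul, map_add, map_sub,
        map_smul, zero_sub, sub_neg_eq_add, mul_add, mul_sub, mul_neg, smul_sub, smul_add,
        map_neg, mul_zero, sub_zero, zero_mul, neg_neg, zero_add]
      try abel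
  have expand : eta N * x
      = ∑ i : Fin N, ιE (av N i) * (ιE (bv N i) * x) := by
    rw [eta, Finset.sum_mul]
    simp only [mul_assoc]
  rw [Lam_apply, expand]
  have step : ∀ j : Fin N,
      ctr N (Sum.inr j) (ctr N (Sum.inl j) (∑ i : Fin N, ιE (av N i) * (ιE (bv N i) * x)))
        = (x - ιE (bv N j) * ctr N (Sum.inr j) x - ιE (av N j) * ctr N (Sum.inl j) x)
          + eta N * (ctr N (Sum.inr j) (ctr N (Sum.inl j) x)) := by
    intro j
    rw [map_sum, map_sum, Finset.sum_congr rfl (fun i _ => key i j),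
      Finset.sum_add_distrib, Finset.sum_ite_eq, if_pos (Finset.mem_univ j)]
    congr 1
    rw [eta, Finset.sum_mul]
    simp only [mul_assoc]
  rw [Finset.sum_congr rfl (fun j _ => step j), Finset.sum_add_distrib, ← Finset.mul_sum,
    ← Lam_apply]
  have hsum : ∑ j : Fin N,
      (x - ιE (bv N j) * ctr N (Sum.inr j) x - ιE (av N j) * ctr N (Sum.inl j) x)
      = (N : ℂ) • x - Nop N x := by
    rw [Nop_apply, Fintype.sum_sum_type]
    simp only [Finset.sum_sub_distrib, Finset.sum_const, Finset.card_univ, Fintype.card_fin]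
    have hav : ∀ j : Fin N, (Pi.single (Sum.inl j) 1 : VS N) = av N j := fun j => rfl
    have hbv : ∀ j : Fin N, (Pi.single (Sum.inr j) 1 : VS N) = bv N j := fun j => rfl
    simp only [hav, hbv, Nat.cast_smul_eq_nsmul ℂ]
    abel
  rw [hsum]
  abel

lemma comm_pow {k : ℕ} {x : ExteriorAlgebra ℂ (VS N)} (hx : x ∈ ⋀[ℂ]^k (VS N)) (m : ℕ) :
    Lam N (eta N ^ (m + 1) * x)
      = eta N ^ (m + 1) * Lam N x
        + (((m : ℂ) + 1) * ((N : ℂ) - k - m)) • (eta N ^ m * x) := by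
  induction m with
  | zero =>
      rw [pow_one, pow_zero, one_mul, star, Nop_grade hx]
      have hco : (((0 : ℕ) : ℂ) + 1) * ((N : ℂ) - k - ((0 : ℕ) : ℂ)) = (N : ℂ) - k := by
        push_cast; ring
      rw [hco, sub_smul]
      abel
  | succ m ih =>
      have hy : eta N ^ (m + 1) * x ∈ ⋀[ℂ]^(2 * (m + 1) + k) (VS N) :=
        mul_grade (eta_pow_mem (m + 1)) hx
      have h1 : eta N ^ (m + 1 + 1) * x = eta N * (eta N ^ (m + 1) * x) := by
        rw [pow_succ', mul_assoc]
      rw [h1, star, Nop_grade hy, ih]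
      have hmul : eta N * (eta N ^ (m + 1) * Lam N x) = eta N ^ (m + 1 + 1) * Lam N x := by
        rw [← mul_assoc, ← pow_succ']
      have hmul2 : eta N * (eta N ^ m * x) = eta N ^ (m + 1) * x := by
        rw [← mul_assoc, ← pow_succ']
      rw [mul_add, hmul, mul_smul_comm, hmul2]
      rw [add_assoc, add_sub_assoc]
      congr 1
      rw [← add_smul, ← sub_smul]
      congr 1
      push_cast
      ring

lemma main (N : ℕ) : ∀ k m (x : ExteriorAlgebra ℂ (VS N)),
    x ∈ ⋀[ℂ]^k (VS N) → k + m ≤ N → eta N ^ m * x = 0 → x = 0 := by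
  intro k
  induction k using Nat.strong_induction_on with
  | _ k ihk =>
    intro m
    induction m with
    | zero =>
        intro x _ _ h0
        simpa using h0
    | succ m ihm =>
        intro x hx hle h0
        have hcomm := comm_pow (N := N) hx m
        rw [h0, map_zero] at hcomm
        have hc : ((m : ℂ) + 1) * ((N : ℂ) - k - m) ≠ 0 := by
          apply mul_ne_zero
          · intro h
            have h8 : ((m + 1 : ℕ) : ℂ) = 0 := by push_cast; linear_combination h
            have h9 : m + 1 = 0 := by exact_mod_cast h8
            omega
          · intro h
            have h7 : (N : ℂ) = ((k + m : ℕ) : ℂ) := by push_cast; linear_combination h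
            have hN : N = k + m := Nat.cast_injective h7
            omega
        have hLam : Lam N x = 0 := by
          by_cases hk2 : 2 ≤ k
          · have hLx : Lam N x ∈ ⋀[ℂ]^(k - 2) (VS N) := Lam_grade hx
            have hmul : eta N ^ (m + 2) * Lam N x = 0 := by
              have h2 := congrArg (fun z => eta N * z) hcomm
              simp only [mul_zero] at h2
              rw [mul_add, mul_smul_comm, ← mul_assoc, ← pow_succ', ← mul_assoc,
                ← pow_succ', h0, smul_zero, add_zero] at h2
              rw [show m + 2 = m + 1 + 1 from rfl]
              exact h2.symm
            exact ihk (k - 2) (by omega) (m + 2) (Lam N x) hLx (by omega) hmul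
          · exact Lam_low (by omega) hx
        rw [hLam, mul_zero, zero_add] at hcomm
        have h0' : eta N ^ m * x = 0 := (smul_eq_zero.mp hcomm.symm).resolve_left hc
        exact ihm x hx (by omega) h0'

end LefschetzAux

/-- Symplectic Lefschetz injectivity on exterior powers: for every
`N ≥ 1` and every `k` with `0 ≤ k ≤ N−1`, the linear map `ΛᵏV_N → Λ^{k+2}V_N`,
`v ↦ η_N ∧ v`, is injective. -/
theorem lefschetz_injective (N k : ℕ) (hN : 1 ≤ N) (hk : k ≤ N - 1) :
    ∀ v ∈ EPfin N k, eta N * v = 0 → v = 0 := by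
  intro v hv h0
  have hv' : v ∈ ⋀[ℂ]^k (VS N) := by
    rwa [EPfin, ExteriorAlgebra.ιMulti_span_fixedDegree] at hv
  exact LefschetzAux.main N k 1 v hv' (by omega) (by rwa [pow_one])

end
end

section
/- Injectivity of the stabilization map between fundamental-representation models: let 0 ≤ m ≤ N. If v ∈ Λ^{N−m}V_N satisfies v ∧ α_{N+1} = η_{N+1} ∧ w for some w ∈ Λ^{N−m−1}V_{N+1}, then v = η_N ∧ u for some u ∈ Λ^{N−m−2}V_N. Consequently the linear map M^{(N)}_{N−m} → M^{(N+1)}_{N+1−m} induced by v ↦ v ∧ α_{N+1} is well defined and injective. -/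
open scoped BigOperators

noncomputable section

/-- The infinite-dimensional space `V_∞ = ⋃_N V_N`, with basis vectors `α_{i+1}`
(the `Sum.inl i` coordinates) and `β_{i+1}` (the `Sum.inr i` coordinates), `i : ℕ`. -/
abbrev Vinf : Type := (ℕ ⊕ ℕ) →₀ ℂ

/-- The basis vector `α_{i+1}` of `V_∞`. -/
def avI (i : ℕ) : Vinf := Finsupp.single (Sum.inl i) 1

/-- The basis vector `β_{i+1}` of `V_∞`. -/
def bvI (i : ℕ) : Vinf := Finsupp.single (Sum.inr i) 1

/-- `V_N ⊆ V_∞`: the span of `α₁,…,α_N,β₁,…,β_N`. -/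
def VN (N : ℕ) : Submodule ℂ Vinf :=
  Submodule.span ℂ ({x | ∃ i < N, x = avI i} ∪ {x | ∃ i < N, x = bvI i})

/-- `ΛᵏV_N`, as a subspace of the exterior algebra of `V_∞`:
the span of the `k`-fold wedge products of elements of `V_N`. -/
def EP (N k : ℕ) : Submodule ℂ (ExteriorAlgebra ℂ Vinf) :=
  Submodule.span ℂ
    {z | ∃ f : Fin k → Vinf, (∀ i, f i ∈ VN N) ∧ z = ExteriorAlgebra.ιMulti ℂ k f}

/-- `ΛᵏV_N` for `k ∈ ℤ`, with `ΛᵏV_N = 0` for `k < 0`. -/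
def EPz (N : ℕ) (k : ℤ) : Submodule ℂ (ExteriorAlgebra ℂ Vinf) :=
  if 0 ≤ k then EP N k.toNat else ⊥

/-- `η_N = ∑_{i=1}^N αᵢ ∧ βᵢ ∈ Λ²V_N`. -/
def etaI (N : ℕ) : ExteriorAlgebra ℂ Vinf :=
  ∑ i ∈ Finset.range N, ExteriorAlgebra.ι ℂ (avI i) * ExteriorAlgebra.ι ℂ (bvI i)

/-- The image `η_N ∧ Λ^{k−2}V_N ⊆ ΛᵏV_N` (zero for `k < 2`), so that
`M^{(N)}_k = ΛᵏV_N / (η_N ∧ Λ^{k−2}V_N)` is the `k`-th fundamental representation. -/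
def etaSubI (N k : ℕ) : Submodule ℂ (ExteriorAlgebra ℂ Vinf) :=
  if k < 2 then ⊥ else Submodule.map (LinearMap.mulLeft ℂ (etaI N)) (EP N (k - 2))

-- Auxiliary machinery: contraction with the dual of α_{N+1} and the projection
-- killing α_{N+1}, β_{N+1}.
namespace StabAux
open ExteriorAlgebra

/-- dual functional extracting the `α_{N+1}` coordinate -/
def dN (N : ℕ) : Module.Dual ℂ Vinf := Finsupp.lapply (Sum.inl N)

/-- projection of `V_∞` killing `α_{N+1}` and `β_{N+1}` -/
def pN (N : ℕ) : Vinf →ₗ[ℂ] Vinf :=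
  LinearMap.id - (LinearMap.toSpanSingleton ℂ Vinf (avI N)) ∘ₗ (Finsupp.lapply (Sum.inl N))
    - (LinearMap.toSpanSingleton ℂ Vinf (bvI N)) ∘ₗ (Finsupp.lapply (Sum.inr N))

lemma dN_avI_self (N : ℕ) : dN N (avI N) = 1 := by
  simp [dN, avI]
lemma dN_avI_ne {N i : ℕ} (h : i ≠ N) : dN N (avI i) = 0 := by
  simp [dN, avI, Finsupp.single_apply, h]
lemma dN_bvI (N i : ℕ) : dN N (bvI i) = 0 := by
  simp [dN, bvI]
lemma pN_avI_self (N : ℕ) : pN N (avI N) = 0 := by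
  simp [pN, avI, bvI, Finsupp.single_apply]
lemma pN_avI_ne {N i : ℕ} (h : i ≠ N) : pN N (avI i) = avI i := by
  simp [pN, avI, bvI, Finsupp.single_apply, h]
lemma pN_bvI_self (N : ℕ) : pN N (bvI N) = 0 := by
  simp [pN, avI, bvI, Finsupp.single_apply]
lemma pN_bvI_ne {N i : ℕ} (h : i ≠ N) : pN N (bvI i) = bvI i := by
  simp [pN, avI, bvI, Finsupp.single_apply, h]

lemma dN_VN {N : ℕ} {x : Vinf} (hx : x ∈ VN N) : dN N x = 0 := by
  induction hx using Submodule.span_induction with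
  | mem x h =>
    rcases h with ⟨i, hi, rfl⟩ | ⟨i, hi, rfl⟩
    · exact dN_avI_ne (by omega)
    · exact dN_bvI N i
  | zero => simp
  | add x y _ _ hx hy => simp [hx, hy]
  | smul c x _ hx => simp [hx]

lemma pN_VN {N : ℕ} {x : Vinf} (hx : x ∈ VN N) : pN N x = x := by
  induction hx using Submodule.span_induction with
  | mem x h =>
    rcases h with ⟨i, hi, rfl⟩ | ⟨i, hi, rfl⟩
    · exact pN_avI_ne (by omega)
    · exact pN_bvI_ne (by omega)
  | zero => simp
  | add x y _ _ hx hy => simp [hx, hy]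
  | smul c x _ hx => simp [hx]

lemma avI_mem_VN {i N : ℕ} (h : i < N) : avI i ∈ VN N :=
  Submodule.subset_span (Or.inl ⟨i, h, rfl⟩)
lemma bvI_mem_VN {i N : ℕ} (h : i < N) : bvI i ∈ VN N :=
  Submodule.subset_span (Or.inr ⟨i, h, rfl⟩)

lemma pN_mem {N : ℕ} {x : Vinf} (hx : x ∈ VN (N + 1)) : pN N x ∈ VN N := by
  induction hx using Submodule.span_induction with
  | mem x h =>
    rcases h with ⟨i, hi, rfl⟩ | ⟨i, hi, rfl⟩
    · rcases eq_or_ne i N with rfl | hne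
      · rw [pN_avI_self]; exact Submodule.zero_mem _
      · rw [pN_avI_ne hne]; exact avI_mem_VN (by omega)
    · rcases eq_or_ne i N with rfl | hne
      · rw [pN_bvI_self]; exact Submodule.zero_mem _
      · rw [pN_bvI_ne hne]; exact bvI_mem_VN (by omega)
  | zero => simp
  | add x y _ _ hx hy => rw [map_add]; exact Submodule.add_mem _ hx hy
  | smul c x _ hx => rw [map_smul]; exact Submodule.smul_mem _ _ hx

lemma VN_mono (N : ℕ) : VN N ≤ VN (N + 1) := by
  apply Submodule.span_mono
  rintro x (⟨i, hi, rfl⟩ | ⟨i, hi, rfl⟩)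
  · exact Or.inl ⟨i, by omega, rfl⟩
  · exact Or.inr ⟨i, by omega, rfl⟩

lemma EP_mono (N k : ℕ) : EP N k ≤ EP (N + 1) k := by
  apply Submodule.span_mono
  rintro z ⟨f, hf, rfl⟩
  exact ⟨f, fun i => VN_mono N (hf i), rfl⟩

/-- the projection algebra homomorphism on the exterior algebra -/
def piN (N : ℕ) : ExteriorAlgebra ℂ Vinf →ₐ[ℂ] ExteriorAlgebra ℂ Vinf :=
  ExteriorAlgebra.lift ℂ ⟨(ExteriorAlgebra.ι ℂ) ∘ₗ pN N, fun m => by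
    simp [ExteriorAlgebra.ι_sq_zero]⟩

/-- contraction with `dN` -/
def DN (N : ℕ) : ExteriorAlgebra ℂ Vinf →ₗ[ℂ] ExteriorAlgebra ℂ Vinf :=
  CliffordAlgebra.contractLeft (dN N)

lemma piN_ι (N : ℕ) (x : Vinf) : piN N (ι ℂ x) = ι ℂ (pN N x) := by
  simp [piN]

lemma DN_ι_mul (N : ℕ) (x : Vinf) (a : ExteriorAlgebra ℂ Vinf) :
    DN N (ι ℂ x * a) = dN N x • a - ι ℂ x * DN N a :=
  CliffordAlgebra.contractLeft_ι_mul _ _ _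

lemma DN_one (N : ℕ) : DN N (1 : ExteriorAlgebra ℂ Vinf) = 0 :=
  CliffordAlgebra.contractLeft_one _ _

lemma DN_ι (N : ℕ) (x : Vinf) : DN N (ι ℂ x) = algebraMap ℂ _ (dN N x) :=
  CliffordAlgebra.contractLeft_ι _ _ _

lemma ι_anticomm (x y : Vinf) :
    ι ℂ x * ι ℂ y = -(ι ℂ y * ι ℂ x) := by
  have h := ExteriorAlgebra.ι_sq_zero (R := ℂ) (x + y)
  rw [map_add, add_mul, mul_add, mul_add, ExteriorAlgebra.ι_sq_zero,
    ExteriorAlgebra.ι_sq_zero] at h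
  have h2 : ι ℂ x * ι ℂ y + ι ℂ y * ι ℂ x = 0 := by
    rw [← h]; abel
  exact eq_neg_of_add_eq_zero_left h2

lemma one_mem_EP (M : ℕ) : (1 : ExteriorAlgebra ℂ Vinf) ∈ EP M 0 :=
  Submodule.subset_span ⟨fun i => i.elim0, fun i => i.elim0, by simp⟩

lemma ι_mul_EP {M j : ℕ} {x : Vinf} (hx : x ∈ VN M) {z : ExteriorAlgebra ℂ Vinf}
    (hz : z ∈ EP M j) : ι ℂ x * z ∈ EP M (j + 1) := by
  induction hz using Submodule.span_induction with
  | mem z h =>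
    rcases h with ⟨f, hf, rfl⟩
    refine Submodule.subset_span ⟨Matrix.vecCons x f, ?_, ?_⟩
    · intro i
      refine Fin.cases ?_ ?_ i
      · simpa using hx
      · intro i; simpa using hf i
    · simp
  | zero => rw [mul_zero]; exact Submodule.zero_mem _
  | add a b _ _ ha hb => rw [mul_add]; exact Submodule.add_mem _ ha hb
  | smul c a _ ha => rw [mul_smul_comm]; exact Submodule.smul_mem _ _ ha

lemma mul_ι_comm_aux (j : ℕ) (f : Fin j → Vinf) (x : Vinf) :
    ιMulti ℂ j f * ι ℂ x = ((-1 : ℂ) ^ j) • (ι ℂ x * ιMulti ℂ j f) := by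
  induction j with
  | zero => simp
  | succ j ih =>
    rw [ExteriorAlgebra.ιMulti_succ_apply, mul_assoc, ih, mul_smul_comm,
      ← mul_assoc, ι_anticomm (f 0) x, neg_mul, mul_assoc, smul_neg,
      ← neg_smul, pow_succ]
    ring_nf

lemma mul_ι_comm {M j : ℕ} {z : ExteriorAlgebra ℂ Vinf} (hz : z ∈ EP M j) (x : Vinf) :
    z * ι ℂ x = ((-1 : ℂ) ^ j) • (ι ℂ x * z) := by
  induction hz using Submodule.span_induction with
  | mem z h => rcases h with ⟨f, hf, rfl⟩; exact mul_ι_comm_aux j f x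
  | zero => simp
  | add a b _ _ ha hb => rw [add_mul, ha, hb, mul_add, smul_add]
  | smul c a _ ha => rw [smul_mul_assoc, ha, mul_smul_comm, smul_comm]

lemma piN_ιMulti (N k : ℕ) (f : Fin k → Vinf) :
    piN N (ιMulti ℂ k f) = ιMulti ℂ k (fun i => pN N (f i)) := by
  rw [ExteriorAlgebra.ιMulti_apply, ExteriorAlgebra.ιMulti_apply, map_list_prod]
  congr 1
  rw [List.map_ofFn]
  congr 1
  ext i
  exact piN_ι N (f i)

/-- Lemma A : extracting the coefficient of `α_{N+1}` from `v ∧ α_{N+1}`. -/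
lemma lemA_aux (N : ℕ) : ∀ (k : ℕ) (f : Fin k → Vinf), (∀ i, f i ∈ VN N) →
    piN N (DN N (ιMulti ℂ k f * ι ℂ (avI N))) = ((-1 : ℂ) ^ k) • ιMulti ℂ k f := by
  intro k
  induction k with
  | zero =>
    intro f _
    simp [DN_ι, dN_avI_self]
  | succ k ih =>
    intro f hf
    rw [ExteriorAlgebra.ιMulti_succ_apply, mul_assoc, DN_ι_mul,
      dN_VN (hf 0), zero_smul, zero_sub, map_neg, map_mul, piN_ι,
      pN_VN (hf 0), ih (Matrix.vecTail f) (fun i => hf i.succ),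
      mul_smul_comm, ← neg_smul, pow_succ]
    ring_nf

lemma lemA {N k : ℕ} {v : ExteriorAlgebra ℂ Vinf} (hv : v ∈ EP N k) :
    piN N (DN N (v * ι ℂ (avI N))) = ((-1 : ℂ) ^ k) • v := by
  induction hv using Submodule.span_induction with
  | mem z h => rcases h with ⟨f, hf, rfl⟩; exact lemA_aux N k f hf
  | zero => simp
  | add a b _ _ ha hb => rw [add_mul, map_add, map_add, ha, hb, smul_add]
  | smul c a _ ha => rw [smul_mul_assoc, map_smul, map_smul, ha, smul_comm]

/-- Lemma B : `π(D(η_{N+1} w)) = η_N π(D w)`. -/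
lemma lemB (N : ℕ) (w : ExteriorAlgebra ℂ Vinf) :
    piN N (DN N (etaI (N + 1) * w)) = etaI N * piN N (DN N w) := by
  have hsplit : etaI (N + 1) = etaI N + ι ℂ (avI N) * ι ℂ (bvI N) :=
    Finset.sum_range_succ _ N
  have hterm : ∀ i < N, DN N (ι ℂ (avI i) * ι ℂ (bvI i) * w)
      = ι ℂ (avI i) * ι ℂ (bvI i) * DN N w := by
    intro i hi
    rw [mul_assoc, DN_ι_mul, dN_avI_ne (by omega), zero_smul, zero_sub,
      DN_ι_mul, dN_bvI, zero_smul, zero_sub, mul_neg, neg_neg, mul_assoc]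
  have hEta : DN N (etaI N * w) = etaI N * DN N w := by
    rw [etaI, Finset.sum_mul, map_sum, Finset.sum_mul]
    exact Finset.sum_congr rfl fun i hi => hterm i (Finset.mem_range.mp hi)
  have hExtra : piN N (DN N (ι ℂ (avI N) * ι ℂ (bvI N) * w)) = 0 := by
    rw [mul_assoc, DN_ι_mul, dN_avI_self, one_smul, DN_ι_mul, dN_bvI, zero_smul,
      zero_sub, mul_neg, map_sub, map_neg, map_mul, map_mul, map_mul, piN_ι, piN_ι,
      pN_avI_self, pN_bvI_self, map_zero]
    simp
  have hpiEta : piN N (etaI N) = etaI N := by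
    rw [etaI, map_sum]
    refine Finset.sum_congr rfl fun i hi => ?_
    have hi' := Finset.mem_range.mp hi
    rw [map_mul, piN_ι, piN_ι, pN_avI_ne (by omega), pN_bvI_ne (by omega)]
  rw [hsplit, add_mul, map_add, map_add, hEta, hExtra, add_zero, map_mul, hpiEta]

/-- Lemma C : degree bookkeeping for `π ∘ D`. -/
lemma lemC_aux (N : ℕ) : ∀ (k : ℕ) (f : Fin (k + 1) → Vinf), (∀ i, f i ∈ VN (N + 1)) →
    piN N (DN N (ιMulti ℂ (k + 1) f)) ∈ EP N k := by
  intro k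
  induction k with
  | zero =>
    intro f _
    rw [ExteriorAlgebra.ιMulti_succ_apply]
    have h1 : ιMulti ℂ 0 (Matrix.vecTail f) = 1 := ExteriorAlgebra.ιMulti_zero_apply _
    rw [h1, mul_one, DN_ι, AlgHom.commutes, Algebra.algebraMap_eq_smul_one]
    exact Submodule.smul_mem _ _ (one_mem_EP N)
  | succ k ih =>
    intro f hf
    rw [ExteriorAlgebra.ιMulti_succ_apply, DN_ι_mul, map_sub, map_smul, map_mul, piN_ι]
    refine Submodule.sub_mem _ ?_ ?_
    · refine Submodule.smul_mem _ _ ?_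
      rw [piN_ιMulti]
      exact Submodule.subset_span ⟨_, fun i => pN_mem (hf i.succ), rfl⟩
    · exact ι_mul_EP (pN_mem (hf 0)) (ih (Matrix.vecTail f) (fun i => hf i.succ))

lemma lemC {N k : ℕ} {w : ExteriorAlgebra ℂ Vinf} (hw : w ∈ EP (N + 1) (k + 1)) :
    piN N (DN N w) ∈ EP N k := by
  induction hw using Submodule.span_induction with
  | mem z h => rcases h with ⟨f, hf, rfl⟩; exact lemC_aux N k f hf
  | zero => simp
  | add a b _ _ ha hb => rw [map_add, map_add]; exact Submodule.add_mem _ ha hb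
  | smul c a _ ha => rw [map_smul, map_smul]; exact Submodule.smul_mem _ _ ha

lemma DN_EP_zero {N M : ℕ} {w : ExteriorAlgebra ℂ Vinf} (hw : w ∈ EP M 0) :
    DN N w = 0 := by
  induction hw using Submodule.span_induction with
  | mem z h => rcases h with ⟨f, hf, rfl⟩; simpa using DN_one N
  | zero => simp
  | add a b _ _ ha hb => rw [map_add, ha, hb, add_zero]
  | smul c a _ ha => rw [map_smul, ha, smul_zero]

end StabAux

/-- Injectivity of the stabilization map between fundamental
representation models: let `0 ≤ m ≤ N`.  If `v ∈ Λ^{N−m}V_N` satisfies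
`v ∧ α_{N+1} = η_{N+1} ∧ w` for some `w ∈ Λ^{N−m−1}V_{N+1}`, then `v = η_N ∧ u`
for some `u ∈ Λ^{N−m−2}V_N`.  Consequently the linear map
`M^{(N)}_{N−m} → M^{(N+1)}_{N+1−m}` induced by `v ↦ v ∧ α_{N+1}` is well defined
(second conjunct) and injective (first conjunct). -/
theorem stabilization_injective (N m : ℕ) (hm : m ≤ N) :
    (∀ v ∈ EP N (N - m),
      (∃ w ∈ EPz (N + 1) ((N : ℤ) - m - 1),
          v * ExteriorAlgebra.ι ℂ (avI N) = etaI (N + 1) * w) →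
      ∃ u ∈ EPz N ((N : ℤ) - m - 2), v = etaI N * u) ∧
    (∀ u ∈ EPz N ((N : ℤ) - m - 2),
      ∃ w ∈ EPz (N + 1) ((N : ℤ) - m - 1),
        (etaI N * u) * ExteriorAlgebra.ι ℂ (avI N) = etaI (N + 1) * w) := by
  classical
  obtain ⟨k, hk⟩ : ∃ k, k = N - m := ⟨_, rfl⟩
  rw [← hk]
  constructor
  · rintro v hv ⟨w, hw, heq⟩
    have key : ((-1 : ℂ) ^ k) • v = etaI N * StabAux.piN N (StabAux.DN N w) := by
      have h := congrArg (fun z => StabAux.piN N (StabAux.DN N z)) heq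
      simpa only [StabAux.lemA hv, StabAux.lemB N w] using h
    have hvEq : v = etaI N * (((-1 : ℂ) ^ k) • StabAux.piN N (StabAux.DN N w)) := by
      rw [mul_smul_comm, ← key, smul_smul, ← pow_add, Even.neg_one_pow ⟨k, rfl⟩, one_smul]
    refine ⟨((-1 : ℂ) ^ k) • StabAux.piN N (StabAux.DN N w), ?_, hvEq⟩
    rcases Nat.lt_or_ge k 2 with hklt | hkge
    · have hbot : EPz N ((N : ℤ) - m - 2) = ⊥ := by
        rw [EPz, if_neg (by omega)]
      rw [hbot, Submodule.mem_bot]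
      have hDw : StabAux.DN N w = 0 := by
        rcases (by omega : k = 0 ∨ k = 1) with h0 | h1
        · subst h0
          have hb : EPz (N + 1) ((N : ℤ) - m - 1) = ⊥ := by
            rw [EPz, if_neg (by omega)]
          rw [hb, Submodule.mem_bot] at hw
          rw [hw, map_zero]
        · subst h1
          have hb : EPz (N + 1) ((N : ℤ) - m - 1) = EP (N + 1) 0 := by
            rw [EPz, if_pos (by omega)]
            congr 1
            omega
          rw [hb] at hw
          exact StabAux.DN_EP_zero hw
      rw [hDw, map_zero, smul_zero]
    · have hEP : EPz N ((N : ℤ) - m - 2) = EP N (k - 2) := by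
        rw [EPz, if_pos (by omega)]
        congr 1
        omega
      rw [hEP]
      refine Submodule.smul_mem _ _ ?_
      have hw' : w ∈ EP (N + 1) (k - 2 + 1) := by
        have hEP' : EPz (N + 1) ((N : ℤ) - m - 1) = EP (N + 1) (k - 2 + 1) := by
          rw [EPz, if_pos (by omega)]
          congr 1
          omega
        rwa [hEP'] at hw
      exact StabAux.lemC hw'
  · intro u hu
    rcases Nat.lt_or_ge k 2 with hklt | hkge
    · have hbot : EPz N ((N : ℤ) - m - 2) = ⊥ := by
        rw [EPz, if_neg (by omega)]
      rw [hbot, Submodule.mem_bot] at hu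
      exact ⟨0, Submodule.zero_mem _, by rw [hu, mul_zero, zero_mul, mul_zero]⟩
    · have hEP : EPz N ((N : ℤ) - m - 2) = EP N (k - 2) := by
        rw [EPz, if_pos (by omega)]
        congr 1
        omega
      rw [hEP] at hu
      have hz0 : ExteriorAlgebra.ι ℂ (avI N) * ExteriorAlgebra.ι ℂ (bvI N) *
          ExteriorAlgebra.ι ℂ (avI N) = 0 := by
        rw [mul_assoc, StabAux.ι_anticomm (bvI N) (avI N), mul_neg, ← mul_assoc,
          ExteriorAlgebra.ι_sq_zero, zero_mul, neg_zero]
      have hz2 : ExteriorAlgebra.ι ℂ (avI N) * ExteriorAlgebra.ι ℂ (bvI N) *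
          (ExteriorAlgebra.ι ℂ (avI N) * u) = 0 := by
        rw [← mul_assoc, hz0, zero_mul]
      refine ⟨((-1 : ℂ) ^ (k - 2)) • (ExteriorAlgebra.ι ℂ (avI N) * u), ?_, ?_⟩
      · have hEP' : EPz (N + 1) ((N : ℤ) - m - 1) = EP (N + 1) (k - 2 + 1) := by
          rw [EPz, if_pos (by omega)]
          congr 1
          omega
        rw [hEP']
        exact Submodule.smul_mem _ _
          (StabAux.ι_mul_EP (StabAux.avI_mem_VN (Nat.lt_succ_self N))
            (StabAux.EP_mono N (k - 2) hu))
      · have hsplit : etaI (N + 1) = etaI N + ExteriorAlgebra.ι ℂ (avI N) *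
            ExteriorAlgebra.ι ℂ (bvI N) := Finset.sum_range_succ _ N
        calc (etaI N * u) * ExteriorAlgebra.ι ℂ (avI N)
            = etaI N * (u * ExteriorAlgebra.ι ℂ (avI N)) := mul_assoc _ _ _
          _ = etaI N * (((-1 : ℂ) ^ (k - 2)) • (ExteriorAlgebra.ι ℂ (avI N) * u)) := by
              rw [StabAux.mul_ι_comm hu]
          _ = ((-1 : ℂ) ^ (k - 2)) • (etaI N * (ExteriorAlgebra.ι ℂ (avI N) * u)) :=
              mul_smul_comm _ _ _
          _ = etaI (N + 1) * (((-1 : ℂ) ^ (k - 2)) • (ExteriorAlgebra.ι ℂ (avI N) * u)) := by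
              rw [mul_smul_comm, hsplit, add_mul, hz2, add_zero]


end
end
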